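/- arXiv:1310.1130 — 2 statements merged into one kernel-verified Lean document; each statement's English description precedes it below -/
import Mathlib

section
/- (Smoothing property of B_3) Let s ≥ 0. Then for every t ∈ ℝ the trilinear operator B_3 maps (Ḣ^s)³ into Ḣ^{s+2} and satisfies ‖B_3(φ,ψ,ξ)‖_{Ḣ^{s+2}} ≤ C(s) ‖φ‖_{Ḣ^s} ‖ψ‖_{Ḣ^s} ‖ξ‖_{Ḣ^s}, with a constant C(s) independent of t. -/
open MeasureTheory Set

noncomputable section

/-- The weight `|k|^(2s)` appearing in the `Ḣ^s` norm. -/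
def wt (s : ℝ) (k : ℤ) : ℝ := ((|k| : ℤ) : ℝ) ^ (2 * s)

/-- Membership in the homogeneous Sobolev space `Ḣ^s` of sequences indexed by
nonzero integers. -/
def memH (s : ℝ) (u : ℤ → ℂ) : Prop :=
  Summable (fun k : {k : ℤ // k ≠ 0} => wt s k.1 * ‖u k.1‖ ^ 2)

/-- The `Ḣ^s` norm. -/
def hnorm (s : ℝ) (u : ℤ → ℂ) : ℝ :=
  Real.sqrt (∑' k : {k : ℤ // k ≠ 0}, wt s k.1 * ‖u k.1‖ ^ 2)

/-- The `(Ḣ^s)²` norm of a pair. -/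
def hnorm2 (s : ℝ) (u v : ℤ → ℂ) : ℝ :=
  Real.sqrt (hnorm s u ^ 2 + hnorm s v ^ 2)

/-- The conserved energy functional `𝓔(u,v) = 2‖u‖² + 2‖v‖² + ‖u-v‖²` (in `Ḣ^0`). -/
def energyE (u v : ℤ → ℂ) : ℝ :=
  2 * hnorm 0 u ^ 2 + 2 * hnorm 0 v ^ 2 + hnorm 0 (fun k => u k - v k) ^ 2

/-- Projection `𝒫` onto the low Fourier modes `|k| ≤ N`. -/
def Plow (N : ℕ) (u : ℤ → ℂ) : ℤ → ℂ := fun k => if |k| ≤ (N : ℤ) then u k else 0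

/-- Projection `𝒬 = I - 𝒫` onto the high Fourier modes `|k| > N`. -/
def Qhigh (N : ℕ) (u : ℤ → ℂ) : ℤ → ℂ := fun k => if |k| ≤ (N : ℤ) then 0 else u k

/-- The oscillating factor `e^{3 i k k₁ k₂ t}` with `k₂ = k - k₁`. -/
def osc2 (t : ℝ) (k k1 : ℤ) : ℂ :=
  Complex.exp (3 * Complex.I * (k : ℂ) * (k1 : ℂ) * ((k - k1 : ℤ) : ℂ) * (t : ℂ))

/-- The oscillating factor `e^{3 i (k₁+k₂)(k₂+k₃)(k₁+k₃) t}`. -/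
def osc3 (t : ℝ) (k1 k2 k3 : ℤ) : ℂ :=
  Complex.exp (3 * Complex.I * ((k1 + k2 : ℤ) : ℂ) * ((k2 + k3 : ℤ) : ℂ) *
    ((k1 + k3 : ℤ) : ℂ) * (t : ℂ))

/-- The bilinear operator `B₁` at time `t`. -/
def B1 (t : ℝ) (φ ψ : ℤ → ℂ) : ℤ → ℂ := fun k =>
  Complex.I * (k : ℂ) / 2 *
    ∑' k1 : ℤ, if k1 ≠ 0 ∧ k - k1 ≠ 0 then osc2 t k k1 * φ k1 * ψ (k - k1) else 0

/-- The bilinear operator `B₂` at time `t`. -/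
def B2 (t : ℝ) (φ ψ : ℤ → ℂ) : ℤ → ℂ := fun k =>
  (1 / 6 : ℂ) *
    ∑' k1 : ℤ, if k1 ≠ 0 ∧ k - k1 ≠ 0 then
      osc2 t k k1 * φ k1 * ψ (k - k1) / ((k1 : ℂ) * ((k - k1 : ℤ) : ℂ)) else 0

/-- The trilinear operator `R₃` at time `t`. -/
def R3 (t : ℝ) (φ ψ ξ : ℤ → ℂ) : ℤ → ℂ := fun k =>
  ∑' p : ℤ × ℤ,
    if p.1 ≠ 0 ∧ p.2 ≠ 0 ∧ k - p.1 - p.2 ≠ 0 then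
      osc3 t p.1 p.2 (k - p.1 - p.2) * φ p.1 * ψ p.2 * ξ (k - p.1 - p.2) / (p.1 : ℂ)
    else 0

/-- The resonant part `R₃res` (sum over `(k₁+k₂)(k₂+k₃)(k₁+k₃) = 0`). -/
def R3res (φ ψ ξ : ℤ → ℂ) : ℤ → ℂ := fun k =>
  ∑' p : ℤ × ℤ,
    if p.1 ≠ 0 ∧ p.2 ≠ 0 ∧ k - p.1 - p.2 ≠ 0 ∧
        (p.1 + p.2) * (p.2 + (k - p.1 - p.2)) * (p.1 + (k - p.1 - p.2)) = 0 then
      φ p.1 * ψ p.2 * ξ (k - p.1 - p.2) / (p.1 : ℂ)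
    else 0

/-- The nonresonant part `R₃nres` (sum over `(k₁+k₂)(k₂+k₃)(k₁+k₃) ≠ 0`). -/
def R3nres (t : ℝ) (φ ψ ξ : ℤ → ℂ) : ℤ → ℂ := fun k =>
  ∑' p : ℤ × ℤ,
    if p.1 ≠ 0 ∧ p.2 ≠ 0 ∧ k - p.1 - p.2 ≠ 0 ∧
        (p.1 + p.2) * (p.2 + (k - p.1 - p.2)) * (p.1 + (k - p.1 - p.2)) ≠ 0 then
      osc3 t p.1 p.2 (k - p.1 - p.2) * φ p.1 * ψ p.2 * ξ (k - p.1 - p.2) / (p.1 : ℂ)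
    else 0

/-- The operator `R₃nres1(φ,ψ,ξ) = R₃nres(φ,𝒫ψ,ξ) + R₃nres(φ,𝒬ψ,𝒫ξ)`. -/
def R3nres1 (N : ℕ) (t : ℝ) (φ ψ ξ : ℤ → ℂ) : ℤ → ℂ := fun k =>
  R3nres t φ (Plow N ψ) ξ k + R3nres t φ (Qhigh N ψ) (Plow N ξ) k

/-- The trilinear operator `B₃` (nonresonant indices). -/
def B3 (t : ℝ) (φ ψ ξ : ℤ → ℂ) : ℤ → ℂ := fun k =>
  ∑' p : ℤ × ℤ,
    if p.1 ≠ 0 ∧ p.2 ≠ 0 ∧ k - p.1 - p.2 ≠ 0 ∧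
        (p.1 + p.2) * (p.2 + (k - p.1 - p.2)) * (p.1 + (k - p.1 - p.2)) ≠ 0 then
      osc3 t p.1 p.2 (k - p.1 - p.2) * φ p.1 * ψ p.2 * ξ (k - p.1 - p.2) /
        ((p.1 : ℂ) * ((p.1 + p.2 : ℤ) : ℂ) * ((p.2 + (k - p.1 - p.2) : ℤ) : ℂ) *
          ((p.1 + (k - p.1 - p.2) : ℤ) : ℂ))
    else 0

/-- The operator `B₃₀(φ,ψ,ξ) = B₃(φ,𝒬ψ,𝒬ξ)`. -/
def B30 (N : ℕ) (t : ℝ) (φ ψ ξ : ℤ → ℂ) : ℤ → ℂ :=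
  B3 t φ (Qhigh N ψ) (Qhigh N ξ)

/-- The phase `Φ(k₁,k₂,k₃,k₄) = (k₁+k₂+k₃+k₄)³ - k₁³ - k₂³ - k₃³ - k₄³`. -/
def Phi4 (k1 k2 k3 k4 : ℤ) : ℤ :=
  (k1 + k2 + k3 + k4) ^ 3 - k1 ^ 3 - k2 ^ 3 - k3 ^ 3 - k4 ^ 3

/-- The oscillating factor `e^{i Φ(k₁,k₂,k₃,k₄) t}`. -/
def osc4 (t : ℝ) (k1 k2 k3 k4 : ℤ) : ℂ :=
  Complex.exp (Complex.I * ((Phi4 k1 k2 k3 k4 : ℤ) : ℂ) * (t : ℂ))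

/-- The quadrilinear operator `B₄¹`. -/
def B41 (t : ℝ) (φ ψ ξ η : ℤ → ℂ) : ℤ → ℂ := fun k =>
  ∑' q : ℤ × ℤ × ℤ,
    let k1 := q.1; let k2 := q.2.1; let k3 := q.2.2; let k4 := k - k1 - k2 - k3
    if k1 ≠ 0 ∧ k2 ≠ 0 ∧ k3 ≠ 0 ∧ k4 ≠ 0 ∧
        (k1 + k2) * (k1 + k3 + k4) * (k2 + k3 + k4) ≠ 0 then
      osc4 t k1 k2 k3 k4 * φ k1 * ψ k2 * ξ k3 * η k4 /
        (((k1 + k2 : ℤ) : ℂ) * ((k1 + k3 + k4 : ℤ) : ℂ) * ((k2 + k3 + k4 : ℤ) : ℂ))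
    else 0

/-- The quadrilinear operator `B₄²`. -/
def B42 (t : ℝ) (φ ψ ξ η : ℤ → ℂ) : ℤ → ℂ := fun k =>
  ∑' q : ℤ × ℤ × ℤ,
    let k1 := q.1; let k2 := q.2.1; let k3 := q.2.2; let k4 := k - k1 - k2 - k3
    if k1 ≠ 0 ∧ k2 ≠ 0 ∧ k3 ≠ 0 ∧ k4 ≠ 0 ∧
        (k1 + k2) * (k1 + k3 + k4) * (k2 + k3 + k4) ≠ 0 then
      osc4 t k1 k2 k3 k4 * ((k3 + k4 : ℤ) : ℂ) * φ k1 * ψ k2 * ξ k3 * η k4 /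
        ((k1 : ℂ) * ((k1 + k2 : ℤ) : ℂ) * ((k1 + k3 + k4 : ℤ) : ℂ) *
          ((k2 + k3 + k4 : ℤ) : ℂ))
    else 0

/-- The quadrilinear operator `B₄ = B₄¹ + B₄²`. -/
def B4 (t : ℝ) (φ ψ ξ η : ℤ → ℂ) : ℤ → ℂ := fun k =>
  B41 t φ ψ ξ η k + B42 t φ ψ ξ η k

/-- Right-hand side (before the `ik/2` factor and integration) of the `u`-equation
of the transformed Majda–Biello system. -/
def mbRHSu (u v : ℝ → ℤ → ℂ) (τ : ℝ) (k : ℤ) : ℂ :=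
  ∑' k1 : ℤ, if k1 ≠ 0 ∧ k - k1 ≠ 0 then
    osc2 τ k k1 * (u τ k1 * v τ (k - k1) - u τ k1 * u τ (k - k1)) else 0

/-- Right-hand side (before the `ik/2` factor and integration) of the `v`-equation
of the transformed Majda–Biello system. -/
def mbRHSv (u v : ℝ → ℤ → ℂ) (τ : ℝ) (k : ℤ) : ℂ :=
  ∑' k1 : ℤ, if k1 ≠ 0 ∧ k - k1 ≠ 0 then
    osc2 τ k k1 * (u τ k1 * v τ (k - k1) - v τ k1 * v τ (k - k1)) else 0

/-- `(u,v)` is a solution of the transformed Majda–Biello system on `[0,T]`: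
it belongs to `L^∞([0,T];(Ḣ^0)²)` and satisfies the integrated equations. -/
def IsMBSolution (T : ℝ) (u v : ℝ → ℤ → ℂ) : Prop :=
  (∃ M : ℝ, ∀ t ∈ Icc (0 : ℝ) T,
      memH 0 (u t) ∧ memH 0 (v t) ∧ hnorm2 0 (u t) (v t) ≤ M) ∧
  ∀ k : ℤ, k ≠ 0 → ∀ t ∈ Icc (0 : ℝ) T,
    (u t k - u 0 k = Complex.I * (k : ℂ) / 2 * (∫ τ in (0 : ℝ)..t, mbRHSu u v τ k)) ∧
    (v t k - v 0 k = Complex.I * (k : ℂ) / 2 * (∫ τ in (0 : ℝ)..t, mbRHSv u v τ k))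

/-- The (finite) right-hand side of the `u`-equation of the `N`-th Galerkin system. -/
def galRHSu (N : ℕ) (t : ℝ) (f g : ℤ → ℂ) (k : ℤ) : ℂ :=
  Complex.I * (k : ℂ) / 2 * ∑ k1 ∈ Finset.Icc (-(N : ℤ)) (N : ℤ),
    (if k1 ≠ 0 ∧ k - k1 ≠ 0 ∧ |k - k1| ≤ (N : ℤ) then
      osc2 t k k1 * (f k1 * g (k - k1) - f k1 * f (k - k1)) else 0)

/-- The (finite) right-hand side of the `v`-equation of the `N`-th Galerkin system. -/
def galRHSv (N : ℕ) (t : ℝ) (f g : ℤ → ℂ) (k : ℤ) : ℂ :=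
  Complex.I * (k : ℂ) / 2 * ∑ k1 ∈ Finset.Icc (-(N : ℤ)) (N : ℤ),
    (if k1 ≠ 0 ∧ k - k1 ≠ 0 ∧ |k - k1| ≤ (N : ℤ) then
      osc2 t k k1 * (f k1 * g (k - k1) - g k1 * g (k - k1)) else 0)

/-- `(u,v)` solves the `N`-th Galerkin system on the set `S` with initial data
`(uin, vin)`. -/
def IsGalerkinSolution (N : ℕ) (uin vin : ℤ → ℂ) (S : Set ℝ) (u v : ℝ → ℤ → ℂ) : Prop :=
  (∀ k : ℤ, k ≠ 0 → u 0 k = uin k ∧ v 0 k = vin k) ∧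
  ∀ t ∈ S, ∀ k : ℤ, k ≠ 0 →
    HasDerivWithinAt (fun τ : ℝ => u τ k)
      (if |k| ≤ (N : ℤ) then galRHSu N t (u t) (v t) k else 0) S t ∧
    HasDerivWithinAt (fun τ : ℝ => v τ k)
      (if |k| ≤ (N : ℤ) then galRHSv N t (u t) (v t) k else 0) S t

namespace B3Aux

open ENNReal

/-- `|n|` as an extended nonneg real. -/
def na (n : ℤ) : ℝ≥0∞ := (n.natAbs : ℝ≥0∞)

lemma na_ne_top (n : ℤ) : na n ≠ ∞ := by simp [na]

lemma na_ne_zero {n : ℤ} (h : n ≠ 0) : na n ≠ 0 := by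
  simp [na, Int.natAbs_eq_zero, h]

lemma one_le_na {n : ℤ} (h : n ≠ 0) : 1 ≤ na n := by
  have : 1 ≤ n.natAbs := Int.natAbs_pos.mpr h
  unfold na
  exact_mod_cast this

lemma na_neg (n : ℤ) : na (-n) = na n := by simp [na]

lemma na_add_le (a b : ℤ) : na (a + b) ≤ na a + na b := by
  have := Int.natAbs_add_le a b
  unfold na
  exact_mod_cast this

lemma na_le_na_two_mul (k : ℤ) : na k ≤ na (2 * k) := by
  unfold na
  have : k.natAbs ≤ (2 * k).natAbs := by
    rw [Int.natAbs_mul]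
    simp [Int.natAbs_natCast]
    omega
  exact_mod_cast this

/-- inverse square of `|n|`. -/
def iv (n : ℤ) : ℝ≥0∞ := (na n)⁻¹ * (na n)⁻¹

lemma iv_neg (n : ℤ) : iv (-n) = iv n := by simp [iv, na_neg]

lemma iv_le_one {n : ℤ} (h : n ≠ 0) : iv n ≤ 1 := by
  have h1 : (na n)⁻¹ ≤ 1 := ENNReal.inv_le_one.mpr (one_le_na h)
  calc iv n ≤ 1 * 1 := mul_le_mul' h1 h1
  _ = 1 := one_mul 1

lemma iv_anti {a b : ℤ} (h : na a ≤ na b) : iv b ≤ iv a := by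
  have := ENNReal.inv_le_inv.mpr h
  exact mul_le_mul' this this

lemma na_mul_inv_cancel {n : ℤ} (h : n ≠ 0) : na n * (na n)⁻¹ = 1 :=
  ENNReal.mul_inv_cancel (na_ne_zero h) (na_ne_top n)

lemma na_iv_cancel {n : ℤ} (h : n ≠ 0) : (na n * na n) * iv n = 1 := by
  have := na_mul_inv_cancel h
  calc (na n * na n) * iv n = (na n * (na n)⁻¹) * (na n * (na n)⁻¹) := by unfold iv; ring
  _ = 1 := by rw [this, one_mul]

lemma sq_add_le (x y : ℝ≥0∞) : (x + y) * (x + y) ≤ 4 * (x * x + y * y) := by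
  rcases le_total x y with h | h
  · calc (x + y) * (x + y) ≤ (y + y) * (y + y) := mul_le_mul' (add_le_add h le_rfl) (add_le_add h le_rfl)
    _ = 4 * (y * y) := by ring
    _ ≤ 4 * (x * x + y * y) := by exact mul_le_mul' le_rfl le_add_self
  · calc (x + y) * (x + y) ≤ (x + x) * (x + x) := mul_le_mul' (add_le_add le_rfl h) (add_le_add le_rfl h)
    _ = 4 * (x * x) := by ring
    _ ≤ 4 * (x * x + y * y) := by exact mul_le_mul' le_rfl le_self_add

/-- The key cross inequality. -/
lemma crossIneq {a b d : ℤ} (ha : a ≠ 0) (hb : b ≠ 0) (hd : d ≠ 0)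
    (h : na d ≤ na a + na b) : iv a * iv b ≤ 4 * (iv d * (iv a + iv b)) := by
  set x := (na a)⁻¹ with hx
  set y := (na b)⁻¹ with hy
  have h1 : na d * (x * y) ≤ y + x := by
    calc na d * (x * y) ≤ (na a + na b) * (x * y) := mul_le_mul' h le_rfl
    _ = (na a * x) * y + (na b * y) * x := by ring
    _ = y + x := by rw [na_mul_inv_cancel ha, na_mul_inv_cancel hb, one_mul, one_mul]
  have h2 : (na d * na d) * (iv a * iv b) ≤ 4 * (iv a + iv b) := by
    calc (na d * na d) * (iv a * iv b) = (na d * (x * y)) * (na d * (x * y)) := by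
          unfold iv; rw [← hx, ← hy]; ring
    _ ≤ (y + x) * (y + x) := mul_le_mul' h1 h1
    _ ≤ 4 * (y * y + x * x) := sq_add_le y x
    _ = 4 * (iv b + iv a) := by unfold iv; rw [← hx, ← hy]
    _ = 4 * (iv a + iv b) := by ring
  calc iv a * iv b = (iv d * (na d * na d)) * (iv a * iv b) := by
        rw [mul_comm (iv d), na_iv_cancel hd, one_mul]
  _ = iv d * ((na d * na d) * (iv a * iv b)) := by ring
  _ ≤ iv d * (4 * (iv a + iv b)) := mul_le_mul' le_rfl h2
  _ = 4 * (iv d * (iv a + iv b)) := by ring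

/-- guarded inverse square. -/
def G (n : ℤ) : ℝ≥0∞ := if n = 0 then 0 else iv n

lemma iv_eq_G {n : ℤ} (h : n ≠ 0) : iv n = G n := by simp [G, h]

lemma G_le_one (n : ℤ) : G n ≤ 1 := by
  unfold G; split
  · exact zero_le_one
  · exact iv_le_one (by assumption)

lemma inv_step {x : ℝ} (hx : 1 ≤ x) : x⁻¹ * x⁻¹ + 2 * (x + 1)⁻¹ ≤ 2 * x⁻¹ := by
  have h0 : (0:ℝ) < x := lt_of_lt_of_le one_pos hx
  have h1 : (0:ℝ) < x + 1 := by linarith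
  rw [← sub_nonneg]
  have h : 2 * x⁻¹ - (x⁻¹ * x⁻¹ + 2 * (x + 1)⁻¹) = (x - 1) / (x ^ 2 * (x + 1)) := by
    field_simp
    ring
  rw [h]
  apply div_nonneg (by linarith) (by positivity)

lemma real_partial_sum (N : ℕ) :
    ∑ n ∈ Finset.range N, (((n : ℝ) + 1)⁻¹ * ((n : ℝ) + 1)⁻¹) ≤ 2 - 2 * ((N : ℝ) + 1)⁻¹ := by
  induction N with
  | zero => simp
  | succ N ih =>
      rw [Finset.sum_range_succ]
      have hN : (0:ℝ) ≤ (N : ℝ) := Nat.cast_nonneg N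
      have key := inv_step (x := (N : ℝ) + 1) (by linarith)
      push_cast
      push_cast at ih
      linarith [key]

lemma iv_natSucc (n : ℕ) :
    iv ((n : ℤ) + 1) = ENNReal.ofReal (((n : ℝ) + 1)⁻¹ * ((n : ℝ) + 1)⁻¹) := by
  have h1 : na ((n : ℤ) + 1) = ((n + 1 : ℕ) : ℝ≥0∞) := by
    unfold na
    norm_cast
  have h2 : (0:ℝ) < (n : ℝ) + 1 := by positivity
  rw [ENNReal.ofReal_mul (by positivity), ENNReal.ofReal_inv_of_pos h2]
  have h3 : ENNReal.ofReal ((n : ℝ) + 1) = ((n + 1 : ℕ) : ℝ≥0∞) := by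
    rw [show ((n:ℝ) + 1) = ((n + 1 : ℕ) : ℝ) by push_cast; ring, ENNReal.ofReal_natCast]
  rw [h3, iv, h1]

lemma sum_iv_succ : ∑' n : ℕ, iv ((n : ℤ) + 1) ≤ 2 := by
  rw [ENNReal.tsum_eq_iSup_sum]
  apply iSup_le
  intro s
  obtain ⟨N, hN⟩ := s.exists_nat_subset_range
  calc ∑ n ∈ s, iv ((n : ℤ) + 1) ≤ ∑ n ∈ Finset.range N, iv ((n : ℤ) + 1) :=
        Finset.sum_le_sum_of_subset hN
  _ = ∑ n ∈ Finset.range N, ENNReal.ofReal (((n : ℝ) + 1)⁻¹ * ((n : ℝ) + 1)⁻¹) := by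
        exact Finset.sum_congr rfl fun n _ => iv_natSucc n
  _ = ENNReal.ofReal (∑ n ∈ Finset.range N, (((n : ℝ) + 1)⁻¹ * ((n : ℝ) + 1)⁻¹)) := by
        rw [ENNReal.ofReal_sum_of_nonneg]
        intro n _
        positivity
  _ ≤ ENNReal.ofReal 2 := by
        apply ENNReal.ofReal_le_ofReal
        have h := real_partial_sum N
        have : 2 * ((N : ℝ) + 1)⁻¹ ≥ 0 := by positivity
        linarith
  _ = 2 := by norm_num

lemma int_split (f : ℤ → ℝ≥0∞) :
    ∑' n : ℤ, f n = (∑' n : ℕ, f (n:ℤ)) + ∑' n : ℕ, f (-((n:ℤ)+1)) :=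
  tsum_of_nat_of_neg_add_one ENNReal.summable ENNReal.summable

lemma nat_split (f : ℕ → ℝ≥0∞) : ∑' n : ℕ, f n = f 0 + ∑' n : ℕ, f (n + 1) :=
  tsum_eq_zero_add' ENNReal.summable

lemma sumG : ∑' n : ℤ, G n ≤ 4 := by
  rw [int_split G]
  have h1 : ∑' n : ℕ, G (n : ℤ) ≤ 2 := by
    rw [nat_split (fun n : ℕ => G (n : ℤ))]
    have h0 : G ((0 : ℕ) : ℤ) = 0 := by norm_num [G]
    rw [h0, zero_add]
    calc ∑' n : ℕ, G (((n + 1 : ℕ)) : ℤ) = ∑' n : ℕ, iv ((n : ℤ) + 1) := by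
          apply tsum_congr
          intro n
          have hne : (((n + 1 : ℕ)) : ℤ) ≠ 0 := by omega
          rw [G, if_neg hne]
          norm_num
    _ ≤ 2 := sum_iv_succ
  have h2 : ∑' n : ℕ, G (-((n : ℤ) + 1)) ≤ 2 := by
    calc ∑' n : ℕ, G (-((n : ℤ) + 1)) = ∑' n : ℕ, iv ((n : ℤ) + 1) := by
          apply tsum_congr
          intro n
          have hne : (-((n : ℤ) + 1)) ≠ 0 := by omega
          rw [G, if_neg hne]
          exact iv_neg _
    _ ≤ 2 := sum_iv_succ
  calc (∑' n : ℕ, G (n : ℤ)) + ∑' n : ℕ, G (-((n : ℤ) + 1)) ≤ 2 + 2 := add_le_add h1 h2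
  _ = 4 := by norm_num

lemma sumG_comp (e : ℤ ≃ ℤ) : ∑' n : ℤ, G (e n) ≤ 4 := by
  rw [e.tsum_eq G]; exact sumG

lemma na4_iv2 {k : ℤ} (hk : k ≠ 0) :
    (na k * na k * na k * na k) * (iv k * iv k) = 1 := by
  have h := na_iv_cancel hk
  calc (na k * na k * na k * na k) * (iv k * iv k)
      = ((na k * na k) * iv k) * ((na k * na k) * iv k) := by ring
  _ = 1 := by rw [h, one_mul]

/-- Nonresonance condition, in simplified form. -/
def Ck (k : ℤ) (p : ℤ × ℤ) : Prop :=
  p.1 ≠ 0 ∧ p.2 ≠ 0 ∧ k - p.1 - p.2 ≠ 0 ∧ p.1 + p.2 ≠ 0 ∧ k - p.1 ≠ 0 ∧ k - p.2 ≠ 0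

open Classical in
/-- The square of the smoothing kernel. -/
def kq (k : ℤ) (p : ℤ × ℤ) : ℝ≥0∞ :=
  if Ck k p then (na k * na k * na k * na k) *
    (iv p.1 * iv (p.1 + p.2) * iv (k - p.1) * iv (k - p.2)) else 0

lemma inner_diag {k n : ℤ} (hk : k ≠ 0) (hn : n = -k) :
    ∑' m : ℤ, kq k (n, m) ≤ 4 := by
  have hpt : ∀ m : ℤ, kq k (n, m) ≤
      ((na k * na k * na k * na k) * (iv k * iv k)) * G (n + m) := by
    intro m
    unfold kq
    split
    · rename_i hc
      obtain ⟨h1, h2, h3, h4, h5, h6⟩ := hc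
      simp only at h1 h2 h3 h4 h5 h6 ⊢
      have e1 : iv n = iv k := by rw [hn, iv_neg]
      have e2 : iv (k - n) ≤ iv k := by
        rw [hn, show k - -k = 2 * k by ring]
        exact iv_anti (na_le_na_two_mul k)
      have e3 : iv (k - m) = iv (n + m) := by
        rw [show k - m = -(n + m) by omega, iv_neg]
      have e4 : G (n + m) = iv (n + m) := (iv_eq_G h4).symm
      have e5 : iv (n + m) ≤ 1 := iv_le_one h4
      calc (na k * na k * na k * na k) * (iv n * iv (n + m) * iv (k - n) * iv (k - m))
          = (na k * na k * na k * na k) * (iv k * iv (n + m) * iv (k - n) * iv (n + m)) := by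
            rw [e1, e3]
      _ ≤ (na k * na k * na k * na k) * (iv k * iv (n + m) * iv k * 1) := by
            apply mul_le_mul' le_rfl
            apply mul_le_mul' (mul_le_mul' (mul_le_mul' le_rfl le_rfl) e2) e5
      _ = ((na k * na k * na k * na k) * (iv k * iv k)) * G (n + m) := by
            rw [e4]; ring
    · exact zero_le
  calc ∑' m : ℤ, kq k (n, m)
      ≤ ∑' m : ℤ, ((na k * na k * na k * na k) * (iv k * iv k)) * G (n + m) :=
        ENNReal.tsum_le_tsum hpt
  _ = ((na k * na k * na k * na k) * (iv k * iv k)) * ∑' m : ℤ, G (n + m) :=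
        ENNReal.tsum_mul_left
  _ = ∑' m : ℤ, G (n + m) := by rw [na4_iv2 hk, one_mul]
  _ ≤ 4 := sumG_comp (Equiv.addLeft n)

lemma inner_main {k n : ℤ} (hk : k ≠ 0) (hn : n ≠ 0) (hkn : k - n ≠ 0) (hkn' : k + n ≠ 0) :
    ∑' m : ℤ, kq k (n, m) ≤
      ((na k * na k * na k * na k) * (iv n * iv (k - n))) * (32 * iv (k + n)) := by
  have hpt : ∀ m : ℤ, kq k (n, m) ≤
      ((na k * na k * na k * na k) * (iv n * iv (k - n))) *
        (4 * (iv (k + n) * (G (n + m) + G (k - m)))) := by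
    intro m
    unfold kq
    split
    · rename_i hc
      obtain ⟨h1, h2, h3, h4, h5, h6⟩ := hc
      simp only at h1 h2 h3 h4 h5 h6 ⊢
      have hd : na (k + n) ≤ na (n + m) + na (k - m) := by
        rw [show k + n = (n + m) + (k - m) by ring]
        exact na_add_le _ _
      have hcross := crossIneq h4 h6 hkn' hd
      have e1 : G (n + m) = iv (n + m) := (iv_eq_G h4).symm
      have e2 : G (k - m) = iv (k - m) := (iv_eq_G h6).symm
      calc (na k * na k * na k * na k) * (iv n * iv (n + m) * iv (k - n) * iv (k - m))
          = ((na k * na k * na k * na k) * (iv n * iv (k - n))) * (iv (n + m) * iv (k - m)) := by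
            ring
      _ ≤ ((na k * na k * na k * na k) * (iv n * iv (k - n))) *
            (4 * (iv (k + n) * (iv (n + m) + iv (k - m)))) := mul_le_mul' le_rfl hcross
      _ = ((na k * na k * na k * na k) * (iv n * iv (k - n))) *
            (4 * (iv (k + n) * (G (n + m) + G (k - m)))) := by rw [e1, e2]
    · exact zero_le
  calc ∑' m : ℤ, kq k (n, m)
      ≤ ∑' m : ℤ, ((na k * na k * na k * na k) * (iv n * iv (k - n))) *
          (4 * (iv (k + n) * (G (n + m) + G (k - m)))) := ENNReal.tsum_le_tsum hpt
  _ = ((na k * na k * na k * na k) * (iv n * iv (k - n))) * (4 * iv (k + n)) *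
        ∑' m : ℤ, (G (n + m) + G (k - m)) := by
        rw [← ENNReal.tsum_mul_left]
        apply tsum_congr; intro m; ring
  _ ≤ ((na k * na k * na k * na k) * (iv n * iv (k - n))) * (4 * iv (k + n)) * (4 + 4) := by
        apply mul_le_mul' le_rfl
        rw [ENNReal.tsum_add]
        exact add_le_add (sumG_comp (Equiv.addLeft n)) (sumG_comp (Equiv.subLeft k))
  _ = ((na k * na k * na k * na k) * (iv n * iv (k - n))) * (32 * iv (k + n)) := by ring

lemma outer_main {k n : ℤ} (hk : k ≠ 0) (hn : n ≠ 0) (hkn : k - n ≠ 0) (hkn' : k + n ≠ 0) :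
    ((na k * na k * na k * na k) * (iv n * iv (k - n))) * (32 * iv (k + n)) ≤
      512 * (G n + G (k + n) + G (k - n) + G (k + n)) := by
  have h2k : (2 : ℤ) * k ≠ 0 := by omega
  have h5 : iv n * iv (k - n) ≤ 4 * (iv k * (iv n + iv (k - n))) := by
    apply crossIneq hn hkn hk
    have h := na_add_le n (k - n)
    rw [show n + (k - n) = k by ring] at h
    exact h
  have h6 : iv n * iv (k + n) ≤ 4 * (iv k * (iv n + iv (k + n))) := by
    apply crossIneq hn hkn' hk
    have h := na_add_le (-n) (k + n)
    rw [show -n + (k + n) = k by ring, na_neg] at h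
    exact h
  have h7 : iv (k - n) * iv (k + n) ≤ 4 * (iv k * (iv (k - n) + iv (k + n))) := by
    have hd : na (2 * k) ≤ na (k - n) + na (k + n) := by
      have h := na_add_le (k - n) (k + n)
      rw [show (k - n) + (k + n) = 2 * k by ring] at h
      exact h
    have h8 : iv (2 * k) ≤ iv k := iv_anti (na_le_na_two_mul k)
    exact (crossIneq hkn hkn' h2k hd).trans
      (mul_le_mul' le_rfl (mul_le_mul' h8 le_rfl))
  have e1 : G n = iv n := (iv_eq_G hn).symm
  have e2 : G (k + n) = iv (k + n) := (iv_eq_G hkn').symm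
  have e3 : G (k - n) = iv (k - n) := (iv_eq_G hkn).symm
  have cancel := na4_iv2 hk
  calc ((na k * na k * na k * na k) * (iv n * iv (k - n))) * (32 * iv (k + n))
      = (na k * na k * na k * na k) * (32 * ((iv n * iv (k - n)) * iv (k + n))) := by ring
  _ ≤ (na k * na k * na k * na k) *
        (32 * ((4 * (iv k * (iv n + iv (k - n)))) * iv (k + n))) := by
        exact mul_le_mul' le_rfl (mul_le_mul' le_rfl (mul_le_mul' h5 le_rfl))
  _ = (na k * na k * na k * na k) * (128 * iv k *
        (iv n * iv (k + n) + iv (k - n) * iv (k + n))) := by ring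
  _ ≤ (na k * na k * na k * na k) * (128 * iv k *
        (4 * (iv k * (iv n + iv (k + n))) + 4 * (iv k * (iv (k - n) + iv (k + n))))) := by
        exact mul_le_mul' le_rfl (mul_le_mul' le_rfl (add_le_add h6 h7))
  _ = 512 * ((na k * na k * na k * na k) * (iv k * iv k)) *
        (iv n + iv (k + n) + iv (k - n) + iv (k + n)) := by ring
  _ = 512 * (G n + G (k + n) + G (k - n) + G (k + n)) := by
        rw [cancel, e1, e2, e3]; ring

lemma inner_zero {k n : ℤ} (h : n = 0 ∨ k - n = 0) : ∀ m : ℤ, kq k (n, m) = 0 := by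
  intro m
  unfold kq
  rw [if_neg]
  intro hc
  obtain ⟨h1, _, _, _, h5, _⟩ := hc
  simp only at h1 h5
  tauto

lemma kernel_bound {k : ℤ} (hk : k ≠ 0) : ∑' p : ℤ × ℤ, kq k p ≤ 8196 := by
  rw [ENNReal.tsum_prod']
  have hbound : ∀ n : ℤ, ∑' m : ℤ, kq k (n, m) ≤
      (if n = -k then (4 : ℝ≥0∞) else 0) + 512 * (G n + G (k + n) + G (k - n) + G (k + n)) := by
    intro n
    by_cases hn : n = -k
    · rw [if_pos hn]
      exact le_add_right (inner_diag hk hn)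
    · rw [if_neg hn, zero_add]
      by_cases hz : n = 0 ∨ k - n = 0
      · have := inner_zero (k := k) hz
        calc ∑' m : ℤ, kq k (n, m) = ∑' m : ℤ, (0 : ℝ≥0∞) := tsum_congr this
        _ = 0 := by simp
        _ ≤ _ := zero_le
      · push_neg at hz
        have hkn' : k + n ≠ 0 := fun h => hn (by omega)
        exact ((inner_main hk hz.1 hz.2 hkn').trans (outer_main hk hz.1 hz.2 hkn'))
  calc ∑' n : ℤ, ∑' m : ℤ, kq k (n, m)
      ≤ ∑' n : ℤ, ((if n = -k then (4 : ℝ≥0∞) else 0) +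
          512 * (G n + G (k + n) + G (k - n) + G (k + n))) := ENNReal.tsum_le_tsum hbound
  _ = (∑' n : ℤ, (if n = -k then (4 : ℝ≥0∞) else 0)) +
        512 * ∑' n : ℤ, (G n + G (k + n) + G (k - n) + G (k + n)) := by
        rw [ENNReal.tsum_add, ENNReal.tsum_mul_left]
  _ ≤ 4 + 512 * (4 + 4 + 4 + 4) := by
        apply add_le_add
        · rw [tsum_ite_eq]
        · apply mul_le_mul' le_rfl
          rw [ENNReal.tsum_add, ENNReal.tsum_add, ENNReal.tsum_add]
          have g1 : ∑' n : ℤ, G n ≤ 4 := sumG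
          have g2 : ∑' n : ℤ, G (k + n) ≤ 4 := sumG_comp (Equiv.addLeft k)
          have g3 : ∑' n : ℤ, G (k - n) ≤ 4 := sumG_comp (Equiv.subLeft k)
          exact add_le_add (add_le_add (add_le_add g1 g2) g3) g2
  _ = 8196 := by norm_num


lemma cs (f g : ℤ × ℤ → ℝ≥0∞) :
    (∑' p, f p * g p) * (∑' p, f p * g p) ≤
      (∑' p, f p * f p) * (∑' p, g p * g p) := by
  have hpq : Real.HolderConjugate 2 2 := ⟨by norm_num, by norm_num, by norm_num⟩
  have hf : AEMeasurable f (Measure.count : Measure (ℤ × ℤ)) :=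
    (measurable_of_countable f).aemeasurable
  have hg : AEMeasurable g (Measure.count : Measure (ℤ × ℤ)) :=
    (measurable_of_countable g).aemeasurable
  have holder := ENNReal.lintegral_mul_le_Lp_mul_Lq (Measure.count : Measure (ℤ × ℤ)) hpq hf hg
  simp only [Pi.mul_apply, MeasureTheory.lintegral_count] at holder
  set A := ∑' p : ℤ × ℤ, f p ^ (2 : ℝ) with hA
  set B := ∑' p : ℤ × ℤ, g p ^ (2 : ℝ) with hB
  have hA' : A = ∑' p : ℤ × ℤ, f p * f p := by
    rw [hA]; apply tsum_congr; intro p; rw [ENNReal.rpow_two]; ring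
  have hB' : B = ∑' p : ℤ × ℤ, g p * g p := by
    rw [hB]; apply tsum_congr; intro p; rw [ENNReal.rpow_two]; ring
  have key : (A ^ (1/2 : ℝ) * B ^ (1/2 : ℝ)) * (A ^ (1/2 : ℝ) * B ^ (1/2 : ℝ)) = A * B := by
    have ha : A ^ (1/2 : ℝ) * A ^ (1/2 : ℝ) = A := by
      rw [← ENNReal.rpow_add_of_nonneg _ _ (by norm_num) (by norm_num)]
      norm_num
    have hb : B ^ (1/2 : ℝ) * B ^ (1/2 : ℝ) = B := by
      rw [← ENNReal.rpow_add_of_nonneg _ _ (by norm_num) (by norm_num)]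
      norm_num
    calc (A ^ (1/2 : ℝ) * B ^ (1/2 : ℝ)) * (A ^ (1/2 : ℝ) * B ^ (1/2 : ℝ))
        = (A ^ (1/2 : ℝ) * A ^ (1/2 : ℝ)) * (B ^ (1/2 : ℝ) * B ^ (1/2 : ℝ)) := by ring
    _ = A * B := by rw [ha, hb]
  calc (∑' p, f p * g p) * (∑' p, f p * g p)
      ≤ (A ^ (1/2 : ℝ) * B ^ (1/2 : ℝ)) * (A ^ (1/2 : ℝ) * B ^ (1/2 : ℝ)) :=
        mul_le_mul' holder holder
  _ = A * B := key
  _ = (∑' p, f p * f p) * (∑' p, g p * g p) := by rw [hA', hB']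

lemma tsum_triple (f g h : ℤ → ℝ≥0∞) :
    ∑' k : ℤ, ∑' p : ℤ × ℤ, f p.1 * g p.2 * h (k - p.1 - p.2) =
      (∑' j : ℤ, f j) * (∑' j : ℤ, g j) * (∑' j : ℤ, h j) := by
  rw [ENNReal.tsum_comm]
  have inner : ∀ p : ℤ × ℤ, ∑' k : ℤ, f p.1 * g p.2 * h (k - p.1 - p.2) =
      f p.1 * g p.2 * ∑' j : ℤ, h j := by
    intro p
    rw [ENNReal.tsum_mul_left]
    congr 1
    have : ∀ k : ℤ, k - p.1 - p.2 = (Equiv.subRight (p.1 + p.2)) k := by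
      intro k; simp [Equiv.subRight]; ring
    calc ∑' k : ℤ, h (k - p.1 - p.2) = ∑' k : ℤ, h ((Equiv.subRight (p.1 + p.2)) k) :=
          tsum_congr fun k => by rw [this k]
    _ = ∑' j : ℤ, h j := (Equiv.subRight (p.1 + p.2)).tsum_eq h
  calc ∑' p : ℤ × ℤ, ∑' k : ℤ, f p.1 * g p.2 * h (k - p.1 - p.2)
      = ∑' p : ℤ × ℤ, f p.1 * g p.2 * ∑' j : ℤ, h j := tsum_congr inner
  _ = (∑' p : ℤ × ℤ, f p.1 * g p.2) * ∑' j : ℤ, h j := ENNReal.tsum_mul_right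
  _ = (∑' j : ℤ, f j) * (∑' j : ℤ, g j) * (∑' j : ℤ, h j) := by
      congr 1
      rw [ENNReal.tsum_prod']
      calc ∑' a : ℤ, ∑' b : ℤ, f a * g b = ∑' a : ℤ, f a * ∑' b : ℤ, g b := by
            apply tsum_congr; intro a; exact ENNReal.tsum_mul_left
      _ = (∑' j : ℤ, f j) * (∑' j : ℤ, g j) := ENNReal.tsum_mul_right


lemma enorm_tsum_le {ι : Type*} (f : ι → ℂ) :
    (‖∑' i, f i‖₊ : ℝ≥0∞) ≤ ∑' i, (‖f i‖₊ : ℝ≥0∞) := by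
  by_cases h : Summable f
  · have hn : Summable fun i => ‖f i‖ := summable_norm_iff.mpr h
    calc (‖∑' i, f i‖₊ : ℝ≥0∞) = ENNReal.ofReal ‖∑' i, f i‖ :=
          (ofReal_norm _).symm
    _ ≤ ENNReal.ofReal (∑' i, ‖f i‖) := ENNReal.ofReal_le_ofReal (norm_tsum_le_tsum_norm hn)
    _ = ∑' i, ENNReal.ofReal ‖f i‖ := ENNReal.ofReal_tsum_of_nonneg (fun i => norm_nonneg _) hn
    _ = ∑' i, (‖f i‖₊ : ℝ≥0∞) := tsum_congr fun i => ofReal_norm _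
  · rw [tsum_eq_zero_of_not_summable h]
    simp

lemma enorm_intCast (n : ℤ) : (‖((n : ℤ) : ℂ)‖₊ : ℝ≥0∞) = na n := by
  have h1 : ‖((n : ℤ) : ℂ)‖ = ((n.natAbs : ℕ) : ℝ) := by
    rw [Complex.norm_intCast]
    rw [Nat.cast_natAbs, Int.cast_abs]
  rw [← enorm_eq_nnnorm, ← ofReal_norm, h1, ENNReal.ofReal_natCast, na]

lemma osc3_enorm (t : ℝ) (k1 k2 k3 : ℤ) : (‖osc3 t k1 k2 k3‖₊ : ℝ≥0∞) = 1 := by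
  have h : ‖osc3 t k1 k2 k3‖ = 1 := by
    rw [osc3, Complex.norm_exp]
    convert Real.exp_zero using 2
    simp [Complex.mul_re, Complex.mul_im]
  rw [← enorm_eq_nnnorm, ← ofReal_norm, h]
  simp


/-- weighted Fourier coefficient size. -/
def FF (s : ℝ) (u : ℤ → ℂ) (j : ℤ) : ℝ≥0∞ :=
  if j = 0 then 0 else na j ^ s * (‖u j‖₊ : ℝ≥0∞)

lemma ofReal_wt_norm (s' : ℝ) (z : ℂ) {j : ℤ} (hj : j ≠ 0) :
    ENNReal.ofReal (wt s' j * ‖z‖ ^ 2) =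
      (na j ^ s' * (‖z‖₊ : ℝ≥0∞)) * (na j ^ s' * (‖z‖₊ : ℝ≥0∞)) := by
  have hjr : (0:ℝ) < ((j.natAbs : ℕ) : ℝ) := by
    have : 0 < j.natAbs := Int.natAbs_pos.mpr hj
    exact_mod_cast this
  have hwt : wt s' j = ((j.natAbs : ℕ) : ℝ) ^ (2 * s') := by
    rw [wt]
    congr 1
    rw [Int.cast_abs, Nat.cast_natAbs, Int.cast_abs]
  have h1 : ENNReal.ofReal (wt s' j) = na j ^ (2 * s') := by
    rw [hwt, ← ENNReal.ofReal_rpow_of_pos hjr, ENNReal.ofReal_natCast, na]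
  have h2 : na j ^ (2 * s') = na j ^ s' * na j ^ s' := by
    rw [two_mul, ENNReal.rpow_add _ _ (na_ne_zero hj) (na_ne_top j)]
  have h3 : ENNReal.ofReal (‖z‖ ^ 2) = (‖z‖₊ : ℝ≥0∞) * (‖z‖₊ : ℝ≥0∞) := by
    rw [sq, ENNReal.ofReal_mul (norm_nonneg z), ofReal_norm, enorm_eq_nnnorm]
  have hwt0 : 0 ≤ wt s' j := by
    rw [hwt]; positivity
  rw [ENNReal.ofReal_mul hwt0, h1, h2, h3]
  ring

lemma FF_sq {s : ℝ} {u : ℤ → ℂ} {j : ℤ} (hj : j ≠ 0) :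
    FF s u j * FF s u j = ENNReal.ofReal (wt s j * ‖u j‖ ^ 2) := by
  rw [FF, if_neg hj, ofReal_wt_norm s (u j) hj]

lemma sumFF_eq (s : ℝ) (u : ℤ → ℂ) (h : memH s u) :
    ∑' j : ℤ, FF s u j * FF s u j = ENNReal.ofReal (hnorm s u ^ 2) := by
  have hnn : ∀ k : {k : ℤ // k ≠ 0}, 0 ≤ wt s k.1 * ‖u k.1‖ ^ 2 := by
    intro k
    have : (0:ℝ) ≤ wt s k.1 := Real.rpow_nonneg (by positivity) _
    positivity
  have hsq : hnorm s u ^ 2 = ∑' k : {k : ℤ // k ≠ 0}, wt s k.1 * ‖u k.1‖ ^ 2 := by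
    rw [hnorm, Real.sq_sqrt (tsum_nonneg hnn)]
  rw [hsq, ENNReal.ofReal_tsum_of_nonneg hnn h]
  rw [← tsum_subtype_eq_of_support_subset (s := {j : ℤ | j ≠ 0})]
  · exact tsum_congr fun j => FF_sq j.2
  · intro j hj
    simp only [Function.mem_support, ne_eq] at hj
    intro hj0
    apply hj
    rw [FF, if_pos hj0, zero_mul]

lemma memH_of_ne_top (s : ℝ) (u : ℤ → ℂ)
    (h : ∑' k : {k : ℤ // k ≠ 0}, ENNReal.ofReal (wt s k.1 * ‖u k.1‖ ^ 2) ≠ ∞) :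
    memH s u := by
  have hs := ENNReal.summable_toReal h
  apply hs.congr
  intro k
  apply ENNReal.toReal_ofReal
  have : (0:ℝ) ≤ wt s k.1 := Real.rpow_nonneg (by positivity) _
  positivity


open Classical in
/-- Square root factor of the kernel. -/
def Ak (k : ℤ) (p : ℤ × ℤ) : ℝ≥0∞ :=
  if Ck k p then (na k * na k) *
    ((na p.1)⁻¹ * (na (p.1 + p.2))⁻¹ * (na (k - p.1))⁻¹ * (na (k - p.2))⁻¹) else 0

lemma Ak_sq (k : ℤ) (p : ℤ × ℤ) : Ak k p * Ak k p = kq k p := by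
  unfold Ak kq iv
  split
  · ring
  · rw [mul_zero]

/-- The guard condition appearing in the definition of `B3`. -/
def Bcond (k : ℤ) (p : ℤ × ℤ) : Prop :=
  p.1 ≠ 0 ∧ p.2 ≠ 0 ∧ k - p.1 - p.2 ≠ 0 ∧
    (p.1 + p.2) * (p.2 + (k - p.1 - p.2)) * (p.1 + (k - p.1 - p.2)) ≠ 0

lemma bcond_iff (k : ℤ) (p : ℤ × ℤ) : Bcond k p ↔ Ck k p := by
  unfold Bcond Ck
  rw [show p.2 + (k - p.1 - p.2) = k - p.1 by ring,
    show p.1 + (k - p.1 - p.2) = k - p.2 by ring, mul_ne_zero_iff, mul_ne_zero_iff]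
  tauto

lemma inv_mul4 {a b c d : ℤ} (ha : a ≠ 0) (hb : b ≠ 0) (hc : c ≠ 0) (hd : d ≠ 0) :
    (na a * na b * na c * na d)⁻¹ = (na a)⁻¹ * (na b)⁻¹ * (na c)⁻¹ * (na d)⁻¹ := by
  rw [ENNReal.mul_inv (Or.inr (na_ne_top d)) (Or.inr (na_ne_zero hd))]
  rw [ENNReal.mul_inv (Or.inr (na_ne_top c)) (Or.inr (na_ne_zero hc))]
  rw [ENNReal.mul_inv (Or.inr (na_ne_top b)) (Or.inr (na_ne_zero hb))]

/-- The summand of `B3`. -/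
def b3term (t : ℝ) (φ ψ ξ : ℤ → ℂ) (k : ℤ) (p : ℤ × ℤ) : ℂ :=
  if p.1 ≠ 0 ∧ p.2 ≠ 0 ∧ k - p.1 - p.2 ≠ 0 ∧
      (p.1 + p.2) * (p.2 + (k - p.1 - p.2)) * (p.1 + (k - p.1 - p.2)) ≠ 0 then
    osc3 t p.1 p.2 (k - p.1 - p.2) * φ p.1 * ψ p.2 * ξ (k - p.1 - p.2) /
      ((p.1 : ℂ) * ((p.1 + p.2 : ℤ) : ℂ) * ((p.2 + (k - p.1 - p.2) : ℤ) : ℂ) *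
        ((p.1 + (k - p.1 - p.2) : ℤ) : ℂ))
  else 0

lemma b3_eq (t : ℝ) (φ ψ ξ : ℤ → ℂ) (k : ℤ) :
    B3 t φ ψ ξ k = ∑' p : ℤ × ℤ, b3term t φ ψ ξ k p := rfl

lemma na_le_three {k : ℤ} {p : ℤ × ℤ} (h1 : p.1 ≠ 0) (h2 : p.2 ≠ 0)
    (h3 : k - p.1 - p.2 ≠ 0) :
    na k ≤ 3 * (na p.1 * na p.2 * na (k - p.1 - p.2)) := by
  have ht : k.natAbs ≤ p.1.natAbs + p.2.natAbs + (k - p.1 - p.2).natAbs := by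
    have e : (p.1 + p.2) + (k - p.1 - p.2) = k := by ring
    have t1 := Int.natAbs_add_le (p.1 + p.2) (k - p.1 - p.2)
    have t2 := Int.natAbs_add_le p.1 p.2
    rw [e] at t1
    omega
  have hb1 : 1 ≤ p.1.natAbs := Int.natAbs_pos.mpr h1
  have hb2 : 1 ≤ p.2.natAbs := Int.natAbs_pos.mpr h2
  have hb3 : 1 ≤ (k - p.1 - p.2).natAbs := Int.natAbs_pos.mpr h3
  have m1 : p.1.natAbs ≤ p.1.natAbs * p.2.natAbs * (k - p.1 - p.2).natAbs := by
    calc p.1.natAbs = p.1.natAbs * 1 * 1 := by ring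
    _ ≤ _ := Nat.mul_le_mul (Nat.mul_le_mul le_rfl hb2) hb3
  have m2 : p.2.natAbs ≤ p.1.natAbs * p.2.natAbs * (k - p.1 - p.2).natAbs := by
    calc p.2.natAbs = 1 * p.2.natAbs * 1 := by ring
    _ ≤ _ := Nat.mul_le_mul (Nat.mul_le_mul hb1 le_rfl) hb3
  have m3 : (k - p.1 - p.2).natAbs ≤ p.1.natAbs * p.2.natAbs * (k - p.1 - p.2).natAbs := by
    calc (k - p.1 - p.2).natAbs = 1 * 1 * (k - p.1 - p.2).natAbs := by ring
    _ ≤ _ := Nat.mul_le_mul (Nat.mul_le_mul hb1 hb2) le_rfl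
  have key : k.natAbs ≤ 3 * (p.1.natAbs * p.2.natAbs * (k - p.1 - p.2).natAbs) := by
    calc k.natAbs ≤ p.1.natAbs + p.2.natAbs + (k - p.1 - p.2).natAbs := ht
    _ ≤ p.1.natAbs * p.2.natAbs * (k - p.1 - p.2).natAbs +
        p.1.natAbs * p.2.natAbs * (k - p.1 - p.2).natAbs +
        p.1.natAbs * p.2.natAbs * (k - p.1 - p.2).natAbs := by
          exact Nat.add_le_add (Nat.add_le_add m1 m2) m3
    _ = 3 * (p.1.natAbs * p.2.natAbs * (k - p.1 - p.2).natAbs) := by ring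
  unfold na
  calc ((k.natAbs : ℕ) : ℝ≥0∞) ≤ ((3 * (p.1.natAbs * p.2.natAbs * (k - p.1 - p.2).natAbs) : ℕ) : ℝ≥0∞) := by
        exact_mod_cast key
  _ = 3 * (((p.1.natAbs : ℕ) : ℝ≥0∞) * ((p.2.natAbs : ℕ) : ℝ≥0∞) * (((k - p.1 - p.2).natAbs : ℕ) : ℝ≥0∞)) := by
        push_cast
        ring


lemma quot_enorm (t : ℝ) (φ ψ ξ : ℤ → ℂ) (k : ℤ) (p : ℤ × ℤ) (hc : Ck k p) :
    (‖osc3 t p.1 p.2 (k - p.1 - p.2) * φ p.1 * ψ p.2 * ξ (k - p.1 - p.2) /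
        ((p.1 : ℂ) * ((p.1 + p.2 : ℤ) : ℂ) * ((p.2 + (k - p.1 - p.2) : ℤ) : ℂ) *
          ((p.1 + (k - p.1 - p.2) : ℤ) : ℂ))‖₊ : ℝ≥0∞) =
      ((‖φ p.1‖₊ : ℝ≥0∞) * (‖ψ p.2‖₊ : ℝ≥0∞) * (‖ξ (k - p.1 - p.2)‖₊ : ℝ≥0∞)) *
        ((na p.1)⁻¹ * (na (p.1 + p.2))⁻¹ * (na (k - p.1))⁻¹ * (na (k - p.2))⁻¹) := by
  obtain ⟨h1, h2, h3, h4, h5, h6⟩ := hc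
  rw [show p.2 + (k - p.1 - p.2) = k - p.1 by ring,
    show p.1 + (k - p.1 - p.2) = k - p.2 by ring]
  have hD : ((p.1 : ℂ) * ((p.1 + p.2 : ℤ) : ℂ) * ((k - p.1 : ℤ) : ℂ) * ((k - p.2 : ℤ) : ℂ)) ≠ 0 := by
    have c1 : (p.1 : ℂ) ≠ 0 := Int.cast_ne_zero.mpr h1
    have c2 : ((p.1 + p.2 : ℤ) : ℂ) ≠ 0 := Int.cast_ne_zero.mpr h4
    have c3 : ((k - p.1 : ℤ) : ℂ) ≠ 0 := Int.cast_ne_zero.mpr h5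
    have c4 : ((k - p.2 : ℤ) : ℂ) ≠ 0 := Int.cast_ne_zero.mpr h6
    exact mul_ne_zero (mul_ne_zero (mul_ne_zero c1 c2) c3) c4
  have hDnz : ‖(p.1 : ℂ) * ((p.1 + p.2 : ℤ) : ℂ) * ((k - p.1 : ℤ) : ℂ) * ((k - p.2 : ℤ) : ℂ)‖₊ ≠ 0 :=
    nnnorm_ne_zero_iff.mpr hD
  rw [div_eq_mul_inv, nnnorm_mul, nnnorm_inv, ENNReal.coe_mul, ENNReal.coe_inv hDnz]
  have hXe : (‖osc3 t p.1 p.2 (k - p.1 - p.2) * φ p.1 * ψ p.2 * ξ (k - p.1 - p.2)‖₊ : ℝ≥0∞) =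
      (‖φ p.1‖₊ : ℝ≥0∞) * (‖ψ p.2‖₊ : ℝ≥0∞) * (‖ξ (k - p.1 - p.2)‖₊ : ℝ≥0∞) := by
    rw [nnnorm_mul, nnnorm_mul, nnnorm_mul, ENNReal.coe_mul, ENNReal.coe_mul, ENNReal.coe_mul,
      osc3_enorm, one_mul]
  have hDe : (‖(p.1 : ℂ) * ((p.1 + p.2 : ℤ) : ℂ) * ((k - p.1 : ℤ) : ℂ) * ((k - p.2 : ℤ) : ℂ)‖₊ : ℝ≥0∞) =
      na p.1 * na (p.1 + p.2) * na (k - p.1) * na (k - p.2) := by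
    rw [nnnorm_mul, nnnorm_mul, nnnorm_mul, ENNReal.coe_mul, ENNReal.coe_mul, ENNReal.coe_mul,
      enorm_intCast, enorm_intCast, enorm_intCast, enorm_intCast]
  rw [hXe, hDe, inv_mul4 h1 h4 h5 h6]

lemma point_bound {s : ℝ} (hs : 0 ≤ s) (t : ℝ) (φ ψ ξ : ℤ → ℂ) (k : ℤ) (p : ℤ × ℤ) :
    na k ^ (s + 2) * (‖b3term t φ ψ ξ k p‖₊ : ℝ≥0∞) ≤
      (3 : ℝ≥0∞) ^ s * (Ak k p * (FF s φ p.1 * FF s ψ p.2 * FF s ξ (k - p.1 - p.2))) := by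
  rw [b3term]
  split
  · rename_i hcc
    have hc : Ck k p := (bcond_iff k p).mp hcc
    obtain ⟨h1, h2, h3, h4, h5, h6⟩ := hc
    rw [quot_enorm t φ ψ ξ k p ⟨h1, h2, h3, h4, h5, h6⟩]
    have hsplit : na k ^ (s + 2) = na k ^ s * (na k * na k) := by
      rw [ENNReal.rpow_add_of_nonneg s 2 hs (by norm_num), ENNReal.rpow_two, sq]
    have hle := na_le_three h1 h2 h3 (k := k)
    have hpow : na k ^ s ≤ (3 : ℝ≥0∞) ^ s *
        (na p.1 ^ s * na p.2 ^ s * na (k - p.1 - p.2) ^ s) := by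
      have h := ENNReal.rpow_le_rpow hle hs
      rwa [ENNReal.mul_rpow_of_nonneg _ _ hs, ENNReal.mul_rpow_of_nonneg _ _ hs,
        ENNReal.mul_rpow_of_nonneg _ _ hs] at h
    have eA : Ak k p = (na k * na k) *
        ((na p.1)⁻¹ * (na (p.1 + p.2))⁻¹ * (na (k - p.1))⁻¹ * (na (k - p.2))⁻¹) := by
      have hck : Ck k p := ⟨h1, h2, h3, h4, h5, h6⟩
      rw [Ak, if_pos hck]
    have e1 : FF s φ p.1 = na p.1 ^ s * (‖φ p.1‖₊ : ℝ≥0∞) := by rw [FF, if_neg h1]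
    have e2 : FF s ψ p.2 = na p.2 ^ s * (‖ψ p.2‖₊ : ℝ≥0∞) := by rw [FF, if_neg h2]
    have e3 : FF s ξ (k - p.1 - p.2) = na (k - p.1 - p.2) ^ s *
        (‖ξ (k - p.1 - p.2)‖₊ : ℝ≥0∞) := by rw [FF, if_neg h3]
    calc na k ^ (s + 2) *
          (((‖φ p.1‖₊ : ℝ≥0∞) * (‖ψ p.2‖₊ : ℝ≥0∞) * (‖ξ (k - p.1 - p.2)‖₊ : ℝ≥0∞)) *
            ((na p.1)⁻¹ * (na (p.1 + p.2))⁻¹ * (na (k - p.1))⁻¹ * (na (k - p.2))⁻¹))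
        = na k ^ s * ((na k * na k) *
            (((‖φ p.1‖₊ : ℝ≥0∞) * (‖ψ p.2‖₊ : ℝ≥0∞) * (‖ξ (k - p.1 - p.2)‖₊ : ℝ≥0∞)) *
              ((na p.1)⁻¹ * (na (p.1 + p.2))⁻¹ * (na (k - p.1))⁻¹ * (na (k - p.2))⁻¹))) := by
          rw [hsplit]; ring
    _ ≤ ((3 : ℝ≥0∞) ^ s * (na p.1 ^ s * na p.2 ^ s * na (k - p.1 - p.2) ^ s)) * ((na k * na k) *
            (((‖φ p.1‖₊ : ℝ≥0∞) * (‖ψ p.2‖₊ : ℝ≥0∞) * (‖ξ (k - p.1 - p.2)‖₊ : ℝ≥0∞)) *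
              ((na p.1)⁻¹ * (na (p.1 + p.2))⁻¹ * (na (k - p.1))⁻¹ * (na (k - p.2))⁻¹))) :=
          mul_le_mul' hpow le_rfl
    _ = (3 : ℝ≥0∞) ^ s * (Ak k p * (FF s φ p.1 * FF s ψ p.2 * FF s ξ (k - p.1 - p.2))) := by
          rw [eA, e1, e2, e3]; ring
  · simp

lemma perk {s : ℝ} (hs : 0 ≤ s) (t : ℝ) (φ ψ ξ : ℤ → ℂ) (k : ℤ) :
    na k ^ (s + 2) * (‖B3 t φ ψ ξ k‖₊ : ℝ≥0∞) ≤
      (3 : ℝ≥0∞) ^ s * ∑' p : ℤ × ℤ,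
        Ak k p * (FF s φ p.1 * FF s ψ p.2 * FF s ξ (k - p.1 - p.2)) := by
  calc na k ^ (s + 2) * (‖B3 t φ ψ ξ k‖₊ : ℝ≥0∞)
      ≤ na k ^ (s + 2) * ∑' p : ℤ × ℤ, (‖b3term t φ ψ ξ k p‖₊ : ℝ≥0∞) := by
        rw [b3_eq]
        exact mul_le_mul' le_rfl (enorm_tsum_le _)
  _ = ∑' p : ℤ × ℤ, na k ^ (s + 2) * (‖b3term t φ ψ ξ k p‖₊ : ℝ≥0∞) :=
        ENNReal.tsum_mul_left.symm
  _ ≤ ∑' p : ℤ × ℤ, (3 : ℝ≥0∞) ^ s *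
        (Ak k p * (FF s φ p.1 * FF s ψ p.2 * FF s ξ (k - p.1 - p.2))) :=
        ENNReal.tsum_le_tsum (fun p => point_bound hs t φ ψ ξ k p)
  _ = (3 : ℝ≥0∞) ^ s * ∑' p : ℤ × ℤ,
        Ak k p * (FF s φ p.1 * FF s ψ p.2 * FF s ξ (k - p.1 - p.2)) :=
        ENNReal.tsum_mul_left

lemma perk_sq {s : ℝ} (hs : 0 ≤ s) (t : ℝ) (φ ψ ξ : ℤ → ℂ) {k : ℤ} (hk : k ≠ 0) :
    (na k ^ (s + 2) * (‖B3 t φ ψ ξ k‖₊ : ℝ≥0∞)) *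
      (na k ^ (s + 2) * (‖B3 t φ ψ ξ k‖₊ : ℝ≥0∞)) ≤
      ((3 : ℝ≥0∞) ^ s * (3 : ℝ≥0∞) ^ s * 8196) * ∑' p : ℤ × ℤ,
        (FF s φ p.1 * FF s φ p.1) * (FF s ψ p.2 * FF s ψ p.2) *
          (FF s ξ (k - p.1 - p.2) * FF s ξ (k - p.1 - p.2)) := by
  have h1 := perk hs t φ ψ ξ k
  have h2 := cs (Ak k) (fun p : ℤ × ℤ => FF s φ p.1 * FF s ψ p.2 * FF s ξ (k - p.1 - p.2))
  have h3 : ∑' p : ℤ × ℤ, Ak k p * Ak k p = ∑' p : ℤ × ℤ, kq k p := tsum_congr (Ak_sq k)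
  have h4 := kernel_bound hk
  have h5 : (∑' p : ℤ × ℤ, Ak k p * Ak k p) *
      (∑' p : ℤ × ℤ, (FF s φ p.1 * FF s ψ p.2 * FF s ξ (k - p.1 - p.2)) *
        (FF s φ p.1 * FF s ψ p.2 * FF s ξ (k - p.1 - p.2))) ≤
      8196 * (∑' p : ℤ × ℤ, (FF s φ p.1 * FF s ψ p.2 * FF s ξ (k - p.1 - p.2)) *
        (FF s φ p.1 * FF s ψ p.2 * FF s ξ (k - p.1 - p.2))) := by
    apply mul_le_mul' _ le_rfl
    rw [h3]
    exact h4
  have h6 : ∑' p : ℤ × ℤ, (FF s φ p.1 * FF s ψ p.2 * FF s ξ (k - p.1 - p.2)) *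
        (FF s φ p.1 * FF s ψ p.2 * FF s ξ (k - p.1 - p.2)) =
      ∑' p : ℤ × ℤ, (FF s φ p.1 * FF s φ p.1) * (FF s ψ p.2 * FF s ψ p.2) *
        (FF s ξ (k - p.1 - p.2) * FF s ξ (k - p.1 - p.2)) :=
    tsum_congr fun p => by ring
  calc (na k ^ (s + 2) * (‖B3 t φ ψ ξ k‖₊ : ℝ≥0∞)) *
        (na k ^ (s + 2) * (‖B3 t φ ψ ξ k‖₊ : ℝ≥0∞))
      ≤ ((3 : ℝ≥0∞) ^ s * ∑' p : ℤ × ℤ,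
          Ak k p * (FF s φ p.1 * FF s ψ p.2 * FF s ξ (k - p.1 - p.2))) *
        ((3 : ℝ≥0∞) ^ s * ∑' p : ℤ × ℤ,
          Ak k p * (FF s φ p.1 * FF s ψ p.2 * FF s ξ (k - p.1 - p.2))) := mul_le_mul' h1 h1
  _ = (3 : ℝ≥0∞) ^ s * (3 : ℝ≥0∞) ^ s *
        ((∑' p : ℤ × ℤ, Ak k p * (FF s φ p.1 * FF s ψ p.2 * FF s ξ (k - p.1 - p.2))) *
         (∑' p : ℤ × ℤ, Ak k p * (FF s φ p.1 * FF s ψ p.2 * FF s ξ (k - p.1 - p.2)))) := by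
        ring
  _ ≤ (3 : ℝ≥0∞) ^ s * (3 : ℝ≥0∞) ^ s *
        ((∑' p : ℤ × ℤ, Ak k p * Ak k p) *
          (∑' p : ℤ × ℤ, (FF s φ p.1 * FF s ψ p.2 * FF s ξ (k - p.1 - p.2)) *
            (FF s φ p.1 * FF s ψ p.2 * FF s ξ (k - p.1 - p.2)))) := mul_le_mul' le_rfl h2
  _ ≤ (3 : ℝ≥0∞) ^ s * (3 : ℝ≥0∞) ^ s *
        (8196 * (∑' p : ℤ × ℤ, (FF s φ p.1 * FF s ψ p.2 * FF s ξ (k - p.1 - p.2)) *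
          (FF s φ p.1 * FF s ψ p.2 * FF s ξ (k - p.1 - p.2)))) := mul_le_mul' le_rfl h5
  _ = ((3 : ℝ≥0∞) ^ s * (3 : ℝ≥0∞) ^ s * 8196) * ∑' p : ℤ × ℤ,
        (FF s φ p.1 * FF s φ p.1) * (FF s ψ p.2 * FF s ψ p.2) *
          (FF s ξ (k - p.1 - p.2) * FF s ξ (k - p.1 - p.2)) := by
        rw [h6]; ring

lemma tsum_subtype_le (F : ℤ → ℝ≥0∞) :
    (∑' k : {k : ℤ // k ≠ 0}, F k.1) ≤ ∑' k : ℤ, F k := by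
  calc (∑' k : {k : ℤ // k ≠ 0}, F k.1)
      = ∑' k : ℤ, Set.indicator {k : ℤ | k ≠ 0} F k := tsum_subtype {k : ℤ | k ≠ 0} F
  _ ≤ ∑' k : ℤ, F k := ENNReal.tsum_le_tsum (fun k => Set.indicator_le_self _ _ k)

lemma sqrt_triple_sq (a b c : ℝ) (ha : 0 ≤ a) (hb : 0 ≤ b) (hc : 0 ≤ c) :
    Real.sqrt (a ^ 2 * (b ^ 2 * c ^ 2)) = a * (b * c) := by
  rw [Real.sqrt_mul (by positivity), Real.sqrt_mul (by positivity),
    Real.sqrt_sq ha, Real.sqrt_sq hb, Real.sqrt_sq hc]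

end B3Aux

open B3Aux ENNReal in
/-- Smoothing property of `B₃`. -/
theorem b3_smoothing (s : ℝ) (hs : 0 ≤ s) :
    ∃ C : ℝ, ∀ t : ℝ, ∀ φ ψ ξ : ℤ → ℂ, memH s φ → memH s ψ → memH s ξ →
      memH (s + 2) (B3 t φ ψ ξ) ∧
      hnorm (s + 2) (B3 t φ ψ ξ) ≤ C * hnorm s φ * hnorm s ψ * hnorm s ξ := by
  classical
  refine ⟨Real.sqrt ((3 : ℝ) ^ s * (3 : ℝ) ^ s * 8196), fun t φ ψ ξ hφ hψ hξ => ?_⟩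
  set KE : ℝ≥0∞ := (3 : ℝ≥0∞) ^ s * (3 : ℝ≥0∞) ^ s * 8196 with hKE
  have hKEne : KE ≠ ∞ := by
    rw [hKE]
    apply ENNReal.mul_ne_top (ENNReal.mul_ne_top ?_ ?_) (by norm_num) <;>
      exact ENNReal.rpow_ne_top_of_nonneg hs (by norm_num)
  -- per-term bound
  have hterm : ∀ k : {k : ℤ // k ≠ 0},
      ENNReal.ofReal (wt (s + 2) k.1 * ‖B3 t φ ψ ξ k.1‖ ^ 2) ≤
        KE * ∑' p : ℤ × ℤ, (FF s φ p.1 * FF s φ p.1) * (FF s ψ p.2 * FF s ψ p.2) *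
          (FF s ξ (k.1 - p.1 - p.2) * FF s ξ (k.1 - p.1 - p.2)) := by
    intro k
    rw [ofReal_wt_norm (s + 2) _ k.2]
    exact perk_sq hs t φ ψ ξ k.2
  -- global ENNReal bound
  have hTE : (∑' k : {k : ℤ // k ≠ 0}, ENNReal.ofReal (wt (s + 2) k.1 * ‖B3 t φ ψ ξ k.1‖ ^ 2)) ≤
      KE * (ENNReal.ofReal (hnorm s φ ^ 2) * (ENNReal.ofReal (hnorm s ψ ^ 2) *
        ENNReal.ofReal (hnorm s ξ ^ 2))) := by
    calc (∑' k : {k : ℤ // k ≠ 0}, ENNReal.ofReal (wt (s + 2) k.1 * ‖B3 t φ ψ ξ k.1‖ ^ 2))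
        ≤ ∑' k : {k : ℤ // k ≠ 0}, KE * ∑' p : ℤ × ℤ,
            (FF s φ p.1 * FF s φ p.1) * (FF s ψ p.2 * FF s ψ p.2) *
              (FF s ξ (k.1 - p.1 - p.2) * FF s ξ (k.1 - p.1 - p.2)) :=
          ENNReal.tsum_le_tsum hterm
    _ = KE * ∑' k : {k : ℤ // k ≠ 0}, ∑' p : ℤ × ℤ,
            (FF s φ p.1 * FF s φ p.1) * (FF s ψ p.2 * FF s ψ p.2) *
              (FF s ξ (k.1 - p.1 - p.2) * FF s ξ (k.1 - p.1 - p.2)) := ENNReal.tsum_mul_left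
    _ ≤ KE * ∑' k : ℤ, ∑' p : ℤ × ℤ,
            (FF s φ p.1 * FF s φ p.1) * (FF s ψ p.2 * FF s ψ p.2) *
              (FF s ξ (k - p.1 - p.2) * FF s ξ (k - p.1 - p.2)) :=
          mul_le_mul' le_rfl (tsum_subtype_le _)
    _ = KE * ((∑' j : ℤ, FF s φ j * FF s φ j) * (∑' j : ℤ, FF s ψ j * FF s ψ j) *
          (∑' j : ℤ, FF s ξ j * FF s ξ j)) := by
          rw [tsum_triple (fun j => FF s φ j * FF s φ j) (fun j => FF s ψ j * FF s ψ j)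
            (fun j => FF s ξ j * FF s ξ j)]
    _ = KE * (ENNReal.ofReal (hnorm s φ ^ 2) * (ENNReal.ofReal (hnorm s ψ ^ 2) *
          ENNReal.ofReal (hnorm s ξ ^ 2))) := by
          rw [sumFF_eq s φ hφ, sumFF_eq s ψ hψ, sumFF_eq s ξ hξ]; ring
  have hfin : KE * (ENNReal.ofReal (hnorm s φ ^ 2) * (ENNReal.ofReal (hnorm s ψ ^ 2) *
      ENNReal.ofReal (hnorm s ξ ^ 2))) ≠ ∞ :=
    ENNReal.mul_ne_top hKEne (ENNReal.mul_ne_top ENNReal.ofReal_ne_top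
      (ENNReal.mul_ne_top ENNReal.ofReal_ne_top ENNReal.ofReal_ne_top))
  have hmem : memH (s + 2) (B3 t φ ψ ξ) :=
    memH_of_ne_top _ _ (ne_top_of_le_ne_top hfin hTE)
  refine ⟨hmem, ?_⟩
  -- now the norm bound
  have hnn : ∀ k : {k : ℤ // k ≠ 0}, 0 ≤ wt (s + 2) k.1 * ‖B3 t φ ψ ξ k.1‖ ^ 2 := by
    intro k
    have : (0:ℝ) ≤ wt (s + 2) k.1 := Real.rpow_nonneg (by positivity) _
    positivity
  have hofReal : ENNReal.ofReal (∑' k : {k : ℤ // k ≠ 0}, wt (s + 2) k.1 * ‖B3 t φ ψ ξ k.1‖ ^ 2) =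
      ∑' k : {k : ℤ // k ≠ 0}, ENNReal.ofReal (wt (s + 2) k.1 * ‖B3 t φ ψ ξ k.1‖ ^ 2) :=
    ENNReal.ofReal_tsum_of_nonneg hnn hmem
  have hKEtoReal : KE.toReal = (3 : ℝ) ^ s * (3 : ℝ) ^ s * 8196 := by
    rw [hKE]
    simp only [ENNReal.toReal_mul, ← ENNReal.toReal_rpow]
    norm_num
  have hT : (∑' k : {k : ℤ // k ≠ 0}, wt (s + 2) k.1 * ‖B3 t φ ψ ξ k.1‖ ^ 2) ≤
      ((3 : ℝ) ^ s * (3 : ℝ) ^ s * 8196) * (hnorm s φ ^ 2 * (hnorm s ψ ^ 2 * hnorm s ξ ^ 2)) := by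
    have h1 : (∑' k : {k : ℤ // k ≠ 0}, wt (s + 2) k.1 * ‖B3 t φ ψ ξ k.1‖ ^ 2) =
        (∑' k : {k : ℤ // k ≠ 0}, ENNReal.ofReal (wt (s + 2) k.1 * ‖B3 t φ ψ ξ k.1‖ ^ 2)).toReal := by
      rw [← hofReal, ENNReal.toReal_ofReal (tsum_nonneg hnn)]
    rw [h1]
    have h2 := ENNReal.toReal_mono hfin hTE
    refine h2.trans_eq ?_
    simp only [ENNReal.toReal_mul]
    rw [ENNReal.toReal_ofReal (by positivity), ENNReal.toReal_ofReal (by positivity),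
      ENNReal.toReal_ofReal (by positivity), hKEtoReal]
  have hφ0 : 0 ≤ hnorm s φ := Real.sqrt_nonneg _
  have hψ0 : 0 ≤ hnorm s ψ := Real.sqrt_nonneg _
  have hξ0 : 0 ≤ hnorm s ξ := Real.sqrt_nonneg _
  calc hnorm (s + 2) (B3 t φ ψ ξ)
      = Real.sqrt (∑' k : {k : ℤ // k ≠ 0}, wt (s + 2) k.1 * ‖B3 t φ ψ ξ k.1‖ ^ 2) := rfl
  _ ≤ Real.sqrt (((3 : ℝ) ^ s * (3 : ℝ) ^ s * 8196) *
        (hnorm s φ ^ 2 * (hnorm s ψ ^ 2 * hnorm s ξ ^ 2))) := Real.sqrt_le_sqrt hT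
  _ = Real.sqrt ((3 : ℝ) ^ s * (3 : ℝ) ^ s * 8196) *
        Real.sqrt (hnorm s φ ^ 2 * (hnorm s ψ ^ 2 * hnorm s ξ ^ 2)) := by
        rw [Real.sqrt_mul (by positivity)]
  _ = Real.sqrt ((3 : ℝ) ^ s * (3 : ℝ) ^ s * 8196) *
        (hnorm s φ * (hnorm s ψ * hnorm s ξ)) := by
        rw [sqrt_triple_sq _ _ _ hφ0 hψ0 hξ0]
  _ = Real.sqrt ((3 : ℝ) ^ s * (3 : ℝ) ^ s * 8196) * hnorm s φ * hnorm s ψ * hnorm s ξ := by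
        ring
end
end

section
/- (Trilinear estimate for R_3) Let s > 1/2. Then for every t ∈ ℝ the trilinear operator R_3 maps (Ḣ^s)³ into Ḣ^s and satisfies ‖R_3(φ,ψ,ξ)‖_{Ḣ^s} ≤ C(s) ‖φ‖_{Ḣ^s} ‖ψ‖_{Ḣ^s} ‖ξ‖_{Ḣ^s}, with a constant C(s) independent of t. -/
open MeasureTheory Set

noncomputable section

open scoped ENNReal

namespace R3E

def nn (k : ℤ) : ℝ≥0∞ := (k.natAbs : ℝ≥0∞)

lemma nn_eq (k : ℤ) : nn k = ENNReal.ofReal |(k:ℝ)| := by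
  rw [nn, ← Int.cast_abs, Int.abs_eq_natAbs, Int.cast_natCast, ENNReal.ofReal_natCast]

-- wt in terms of |(k:ℝ)|
lemma wt_eq (s : ℝ) (k : ℤ) : wt s k = |(k:ℝ)| ^ (2*s) := by
  rw [wt, Int.cast_abs]

lemma wt_nonneg (s : ℝ) (k : ℤ) : 0 ≤ wt s k := by
  rw [wt_eq]; exact Real.rpow_nonneg (abs_nonneg _) _

def V (q : ℝ) (k : ℤ) : ℝ≥0∞ := nn k ^ q

lemma ofReal_wt {s : ℝ} (hs : 0 < s) (k : ℤ) : ENNReal.ofReal (wt s k) = V (2*s) k := by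
  rcases eq_or_ne k 0 with rfl | hk
  · rw [wt_eq, V]
    simp [Real.zero_rpow (by positivity : 2*s ≠ 0), nn,
      ENNReal.zero_rpow_of_pos (by positivity : (0:ℝ) < 2*s)]
  · have hpos : (0:ℝ) < |(k:ℝ)| := by simp only [abs_pos]; exact_mod_cast hk
    rw [wt_eq, ← ENNReal.ofReal_rpow_of_pos hpos, V, nn_eq]


def en (u : ℤ → ℂ) (k : ℤ) : ℝ≥0∞ := ENNReal.ofReal ‖u k‖

lemma en_ne_top (u : ℤ → ℂ) (k : ℤ) : en u k ≠ ⊤ := ENNReal.ofReal_ne_top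

def Phi (s : ℝ) (u : ℤ → ℂ) : ℝ≥0∞ := ∑' k : ℤ, V (2*s) k * en u k ^ 2

lemma ofReal_term {s : ℝ} (hs : 0 < s) (u : ℤ → ℂ) (k : ℤ) :
    ENNReal.ofReal (wt s k * ‖u k‖ ^ 2) = V (2*s) k * en u k ^ 2 := by
  rw [ENNReal.ofReal_mul (wt_nonneg s k), ofReal_wt hs, en,
    ← ENNReal.ofReal_pow (norm_nonneg _)]

lemma term_zero {s : ℝ} (hs : 0 < s) (u : ℤ → ℂ) : wt s 0 * ‖u 0‖ ^ 2 = 0 := by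
  rw [wt_eq]
  simp [Real.zero_rpow (by positivity : 2*s ≠ 0)]

lemma indicator_eq {s : ℝ} (hs : 0 < s) (u : ℤ → ℂ) :
    Set.indicator {k : ℤ | k ≠ 0} (fun k => wt s k * ‖u k‖ ^ 2)
      = fun k => wt s k * ‖u k‖ ^ 2 := by
  funext k
  rcases eq_or_ne k 0 with rfl | hk
  · rw [Set.indicator_of_notMem (by simp)]
    exact (term_zero hs u).symm
  · rw [Set.indicator_of_mem (by simpa using hk)]

lemma memH_iff_summable {s : ℝ} (hs : 0 < s) (u : ℤ → ℂ) :
    memH s u ↔ Summable (fun k : ℤ => wt s k * ‖u k‖ ^ 2) := by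
  rw [memH]
  have h := summable_subtype_iff_indicator (s := {k : ℤ | k ≠ 0})
    (f := fun k => wt s k * ‖u k‖ ^ 2)
  rw [indicator_eq hs u] at h
  exact h

lemma Phi_eq_ofReal {s : ℝ} (hs : 0 < s) {u : ℤ → ℂ} (hu : memH s u) :
    Phi s u = ENNReal.ofReal (∑' k : ℤ, wt s k * ‖u k‖ ^ 2) := by
  rw [Phi, ENNReal.ofReal_tsum_of_nonneg
    (fun k => mul_nonneg (wt_nonneg s k) (by positivity)) ((memH_iff_summable hs u).1 hu)]
  exact tsum_congr fun k => (ofReal_term hs u k).symm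

lemma Phi_ne_top {s : ℝ} (hs : 0 < s) {u : ℤ → ℂ} (hu : memH s u) : Phi s u ≠ ⊤ := by
  rw [Phi_eq_ofReal hs hu]; exact ENNReal.ofReal_ne_top

lemma tsum_sub_eq {s : ℝ} (hs : 0 < s) (u : ℤ → ℂ) :
    (∑' k : {k : ℤ // k ≠ 0}, wt s k.1 * ‖u k.1‖ ^ 2) = ∑' k : ℤ, wt s k * ‖u k‖ ^ 2 := by
  have h := tsum_subtype {k : ℤ | k ≠ 0} (fun k => wt s k * ‖u k‖ ^ 2)
  rw [indicator_eq hs u] at h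
  exact h

lemma Phi_toReal {s : ℝ} (hs : 0 < s) {u : ℤ → ℂ} (hu : memH s u) :
    (Phi s u).toReal = ∑' k : {k : ℤ // k ≠ 0}, wt s k.1 * ‖u k.1‖ ^ 2 := by
  rw [Phi_eq_ofReal hs hu, tsum_sub_eq hs u,
    ENNReal.toReal_ofReal (tsum_nonneg fun k => mul_nonneg (wt_nonneg s k) (by positivity))]

lemma hnorm_eq_sqrt {s : ℝ} (hs : 0 < s) {u : ℤ → ℂ} (hu : memH s u) :
    hnorm s u = Real.sqrt (Phi s u).toReal := by
  rw [hnorm, Phi_toReal hs hu]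

lemma nn_ne_top (k : ℤ) : nn k ≠ ⊤ := ENNReal.natCast_ne_top _
lemma one_le_nn {k : ℤ} (hk : k ≠ 0) : 1 ≤ nn k := by
  rw [nn]; exact_mod_cast Nat.one_le_cast.mpr (Int.natAbs_pos.mpr hk)
lemma nn_ne_zero {k : ℤ} (hk : k ≠ 0) : nn k ≠ 0 :=
  fun h => by simpa [h] using one_le_nn hk
lemma one_le_V {q : ℝ} (hq : 0 ≤ q) {k : ℤ} (hk : k ≠ 0) : 1 ≤ V q k := by
  rw [V]
  calc (1:ℝ≥0∞) = 1 ^ q := (ENNReal.one_rpow q).symm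
  _ ≤ nn k ^ q := ENNReal.rpow_le_rpow (one_le_nn hk) hq
lemma V_ne_zero {q : ℝ} (hq : 0 ≤ q) {k : ℤ} (hk : k ≠ 0) : V q k ≠ 0 :=
  fun h => by simpa [h] using one_le_V hq hk
lemma V_ne_top {q : ℝ} (hq : 0 ≤ q) (k : ℤ) : V q k ≠ ⊤ :=
  ENNReal.rpow_ne_top_of_nonneg hq (nn_ne_top k)
lemma V_zero {q : ℝ} (hq : 0 < q) : V q 0 = 0 := by
  rw [V]; simp [nn, ENNReal.zero_rpow_of_pos hq]
lemma V_add {q r : ℝ} (hq : 0 ≤ q) (hr : 0 ≤ r) (k : ℤ) : V (q + r) k = V q k * V r k :=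
  ENNReal.rpow_add_of_nonneg q r hq hr
lemma V_neg (q : ℝ) (k : ℤ) : V (-q) k = (V q k)⁻¹ := ENNReal.rpow_neg _ _
lemma nn_sq (k : ℤ) : nn k ^ (2:ℕ) = V 2 k := by
  rw [V, ← ENNReal.rpow_natCast (nn k) 2]; norm_num

def zf (q : ℝ) (k : ℤ) : ℝ≥0∞ := if k = 0 then 0 else V (-q) k
def Z (q : ℝ) : ℝ≥0∞ := ∑' k : ℤ, zf q k

lemma Z_ne_top {q : ℝ} (hq : 1 < q) : Z q ≠ ⊤ := by
  have hsum : Summable fun k : ℤ => |(k:ℝ)| ^ (-q) := Real.summable_abs_int_rpow hq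
  have heq : ∀ k : ℤ, zf q k = ENNReal.ofReal (|(k:ℝ)| ^ (-q)) := by
    intro k
    rcases eq_or_ne k 0 with rfl | hk
    · simp [zf, Real.zero_rpow (by linarith : -q ≠ 0)]
    · have hpos : (0:ℝ) < |(k:ℝ)| := by
        simp only [abs_pos]; exact_mod_cast hk
      rw [zf, if_neg hk, V, ← ENNReal.ofReal_rpow_of_pos hpos, nn_eq]
  rw [Z]
  simp_rw [heq]
  rw [← ENNReal.ofReal_tsum_of_nonneg (fun k => Real.rpow_nonneg (abs_nonneg _) _) hsum]
  exact ENNReal.ofReal_ne_top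

lemma ennreal_tsum_cs {ι : Type*} (f g : ι → ℝ≥0∞) (hf : ∀ i, f i ≠ ⊤) (hg : ∀ i, g i ≠ ⊤) :
    (∑' i, f i * g i) ^ 2 ≤ (∑' i, f i ^ 2) * ∑' i, g i ^ 2 := by
  classical
  have hfin : ∀ t : Finset ι, (∑ i ∈ t, f i * g i) ^ 2 ≤ (∑' i, f i ^ 2) * ∑' i, g i ^ 2 := by
    intro t
    have : (∑ i ∈ t, f i * g i) ^ 2 ≤ (∑ i ∈ t, f i ^ 2) * ∑ i ∈ t, g i ^ 2 := by
      lift f to ι → NNReal using hf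
      lift g to ι → NNReal using hg
      beta_reduce
      exact_mod_cast Finset.sum_mul_sq_le_sq_mul_sq t f g
    exact this.trans (mul_le_mul' (ENNReal.sum_le_tsum t) (ENNReal.sum_le_tsum t))
  rw [ENNReal.tsum_eq_iSup_sum, sq, ENNReal.iSup_mul]
  refine iSup_le fun t => ?_
  rw [ENNReal.mul_iSup]
  refine iSup_le fun t' => ?_
  calc (∑ i ∈ t, f i * g i) * ∑ i ∈ t', f i * g i
      ≤ (∑ i ∈ t ∪ t', f i * g i) * ∑ i ∈ t ∪ t', f i * g i := by
        gcongr with i hi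
        · exact Finset.subset_union_left
        · exact Finset.subset_union_right
    _ = (∑ i ∈ t ∪ t', f i * g i) ^ 2 := (sq _).symm
    _ ≤ _ := hfin _

lemma cancel_div (a X : ℝ≥0∞) (ha : a ≠ 0) (ha' : a ≠ ⊤) : a / (a * X) = X⁻¹ := by
  rw [div_eq_mul_inv, ENNReal.mul_inv (Or.inl ha) (Or.inl ha'), ← mul_assoc,
    ENNReal.mul_inv_cancel ha ha', one_mul]

lemma abstract_id (w1 w2 w3 v q : ℝ≥0∞) (h1 : w1 ≠ 0) (h1' : w1 ≠ ⊤)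
    (h2 : w2 ≠ 0) (h2' : w2 ≠ ⊤) (h3 : w3 ≠ 0) (h3' : w3 ≠ ⊤)
    (hv : v ≠ 0) (hv' : v ≠ ⊤) :
    (w1 + w2 + w3) / (w1 * v * w2 * w3) * (w1 * w2 * w3 / (w1 + w2 + w3) * q) = q / v := by
  have hσ : w1 + w2 + w3 ≠ 0 := by
    simp only [ne_eq, add_eq_zero]
    tauto
  have hσ' : w1 + w2 + w3 ≠ ⊤ := ENNReal.add_ne_top.mpr ⟨ENNReal.add_ne_top.mpr ⟨h1', h2'⟩, h3'⟩
  have e1 : (w1 * v * w2 * w3)⁻¹ = w1⁻¹ * v⁻¹ * w2⁻¹ * w3⁻¹ := by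
    rw [ENNReal.mul_inv (Or.inl (by exact mul_ne_zero (mul_ne_zero h1 hv) h2)) (Or.inr h3),
      ENNReal.mul_inv (Or.inl (mul_ne_zero h1 hv)) (Or.inr h2),
      ENNReal.mul_inv (Or.inl h1) (Or.inr hv)]
  calc (w1 + w2 + w3) / (w1 * v * w2 * w3) * (w1 * w2 * w3 / (w1 + w2 + w3) * q)
      = ((w1 + w2 + w3) * (w1 + w2 + w3)⁻¹) * ((w1 * w1⁻¹) * (w2 * w2⁻¹) * (w3 * w3⁻¹))
        * (v⁻¹ * q) := by
        rw [div_eq_mul_inv, div_eq_mul_inv, e1]; ring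
    _ = q / v := by
        rw [ENNReal.mul_inv_cancel hσ hσ', ENNReal.mul_inv_cancel h1 h1',
          ENNReal.mul_inv_cancel h2 h2', ENNReal.mul_inv_cancel h3 h3', div_eq_mul_inv]
        ring

lemma abstract_ineq (w1 w2 w3 v : ℝ≥0∞) (h1 : w1 ≠ 0) (h1' : w1 ≠ ⊤)
    (h2 : 1 ≤ w2) (h2' : w2 ≠ ⊤) (h3 : 1 ≤ w3) (h3' : w3 ≠ ⊤) (hv : v ≠ 0) (hv' : v ≠ ⊤) :
    (w1 + w2 + w3) / (w1 * v * w2 * w3) ≤ (v * w2)⁻¹ + (w1 * v * w3)⁻¹ + (w1 * v * w2)⁻¹ := by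
  have h20 : w2 ≠ 0 := fun h => by simp [h] at h2
  have h30 : w3 ≠ 0 := fun h => by simp [h] at h3
  rw [ENNReal.add_div, ENNReal.add_div]
  have t1 : w1 / (w1 * v * w2 * w3) ≤ (v * w2)⁻¹ := by
    rw [show w1 * v * w2 * w3 = w1 * (v * w2 * w3) by ring, cancel_div w1 _ h1 h1']
    exact ENNReal.inv_le_inv' (le_mul_of_one_le_right' h3)
  have t2 : w2 / (w1 * v * w2 * w3) ≤ (w1 * v * w3)⁻¹ := by
    rw [show w1 * v * w2 * w3 = w2 * (w1 * v * w3) by ring, cancel_div w2 _ h20 h2']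
  have t3 : w3 / (w1 * v * w2 * w3) ≤ (w1 * v * w2)⁻¹ := by
    rw [show w1 * v * w2 * w3 = w3 * (w1 * v * w2) by ring, cancel_div w3 _ h30 h3']
  exact add_le_add (add_le_add t1 t2) t3

lemma sum_prod (f g : ℤ → ℝ≥0∞) :
    ∑' p : ℤ × ℤ, f p.1 * g p.2 = (∑' k : ℤ, f k) * ∑' k : ℤ, g k := by
  rw [ENNReal.tsum_prod (f := fun a b => f a * g b)]
  simp_rw [ENNReal.tsum_mul_left, ENNReal.tsum_mul_right]

lemma sum_prod_shift (f g : ℤ → ℝ≥0∞) (k : ℤ) :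
    ∑' p : ℤ × ℤ, f p.1 * g (k - p.1 - p.2) = (∑' j : ℤ, f j) * ∑' j : ℤ, g j := by
  rw [ENNReal.tsum_prod (f := fun a b => f a * g (k - a - b))]
  have : ∀ a : ℤ, ∑' b : ℤ, f a * g (k - a - b) = f a * ∑' j : ℤ, g j := by
    intro a
    rw [ENNReal.tsum_mul_left]
    exact congrArg (f a * ·) ((Equiv.subLeft (k - a)).tsum_eq g)
  simp_rw [this, ENNReal.tsum_mul_right]

def Fq (a b c : ℤ → ℝ≥0∞) (k : ℤ) (p : ℤ × ℤ) : ℝ≥0∞ :=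
  if p.1 ≠ 0 ∧ p.2 ≠ 0 ∧ k - p.1 - p.2 ≠ 0 then
    a p.1 * b p.2 * c (k - p.1 - p.2) / nn p.1 else 0

def Gq (s : ℝ) (k : ℤ) (p : ℤ × ℤ) : ℝ≥0∞ :=
  if p.1 ≠ 0 ∧ p.2 ≠ 0 ∧ k - p.1 - p.2 ≠ 0 then
    (V (2*s) p.1 + V (2*s) p.2 + V (2*s) (k - p.1 - p.2)) /
      (V (2*s) p.1 * V 2 p.1 * V (2*s) p.2 * V (2*s) (k - p.1 - p.2)) else 0

def Hq (s : ℝ) (a b c : ℤ → ℝ≥0∞) (k : ℤ) (p : ℤ × ℤ) : ℝ≥0∞ :=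
  if p.1 ≠ 0 ∧ p.2 ≠ 0 ∧ k - p.1 - p.2 ≠ 0 then
    V (2*s) p.1 * V (2*s) p.2 * V (2*s) (k - p.1 - p.2) /
      (V (2*s) p.1 + V (2*s) p.2 + V (2*s) (k - p.1 - p.2)) *
      (a p.1 ^ 2 * b p.2 ^ 2 * c (k - p.1 - p.2) ^ 2) else 0

lemma FGH {s : ℝ} (hs : 0 < s) (a b c : ℤ → ℝ≥0∞) (k : ℤ) (p : ℤ × ℤ) :
    Fq a b c k p ^ 2 = Gq s k p * Hq s a b c k p := by
  by_cases h : p.1 ≠ 0 ∧ p.2 ≠ 0 ∧ k - p.1 - p.2 ≠ 0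
  · obtain ⟨h1, h2, h3⟩ := h
    have h2s : (0:ℝ) ≤ 2*s := by linarith
    rw [Fq, Gq, Hq, if_pos ⟨h1, h2, h3⟩, if_pos ⟨h1, h2, h3⟩, if_pos ⟨h1, h2, h3⟩,
      abstract_id _ _ _ _ _ (V_ne_zero h2s h1) (V_ne_top h2s _) (V_ne_zero h2s h2)
        (V_ne_top h2s _) (V_ne_zero h2s h3) (V_ne_top h2s _)
        (V_ne_zero (by norm_num) h1) (V_ne_top (by norm_num) _),
      div_eq_mul_inv, div_eq_mul_inv, ← nn_sq, ENNReal.inv_pow]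
    ring
  · rw [Fq, Gq, Hq, if_neg h, if_neg h, if_neg h]
    simp

lemma Gq_ne_top {s : ℝ} (hs : 0 < s) (k : ℤ) (p : ℤ × ℤ) : Gq s k p ≠ ⊤ := by
  by_cases h : p.1 ≠ 0 ∧ p.2 ≠ 0 ∧ k - p.1 - p.2 ≠ 0
  · obtain ⟨h1, h2, h3⟩ := h
    have h2s : (0:ℝ) ≤ 2*s := by linarith
    rw [Gq, if_pos ⟨h1, h2, h3⟩]
    refine (ENNReal.div_lt_top ?_ ?_).ne
    · exact ENNReal.add_ne_top.mpr
        ⟨ENNReal.add_ne_top.mpr ⟨V_ne_top h2s _, V_ne_top h2s _⟩, V_ne_top h2s _⟩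
    · exact mul_ne_zero (mul_ne_zero (mul_ne_zero (V_ne_zero h2s h1)
        (V_ne_zero (by norm_num) h1)) (V_ne_zero h2s h2)) (V_ne_zero h2s h3)
  · rw [Gq, if_neg h]; exact ENNReal.zero_ne_top

lemma Hq_ne_top {s : ℝ} (hs : 0 < s) (a b c : ℤ → ℝ≥0∞) (ha : ∀ j, a j ≠ ⊤)
    (hb : ∀ j, b j ≠ ⊤) (hc : ∀ j, c j ≠ ⊤) (k : ℤ) (p : ℤ × ℤ) :
    Hq s a b c k p ≠ ⊤ := by
  by_cases h : p.1 ≠ 0 ∧ p.2 ≠ 0 ∧ k - p.1 - p.2 ≠ 0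
  · obtain ⟨h1, h2, h3⟩ := h
    have h2s : (0:ℝ) ≤ 2*s := by linarith
    rw [Hq, if_pos ⟨h1, h2, h3⟩]
    refine ENNReal.mul_ne_top ((ENNReal.div_lt_top ?_ ?_).ne) ?_
    · exact ENNReal.mul_ne_top (ENNReal.mul_ne_top (V_ne_top h2s _) (V_ne_top h2s _))
        (V_ne_top h2s _)
    · intro hz
      rw [add_eq_zero, add_eq_zero] at hz
      exact V_ne_zero h2s h1 hz.1.1
    · exact ENNReal.mul_ne_top (ENNReal.mul_ne_top (ENNReal.pow_ne_top (ha _))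
        (ENNReal.pow_ne_top (hb _))) (ENNReal.pow_ne_top (hc _))
  · rw [Hq, if_neg h]; exact ENNReal.zero_ne_top

lemma G_le {s : ℝ} (hs : 0 < s) (k : ℤ) (p : ℤ × ℤ) :
    Gq s k p ≤ zf 2 p.1 * zf (2*s) p.2 + zf (2*s+2) p.1 * zf (2*s) (k - p.1 - p.2)
      + zf (2*s+2) p.1 * zf (2*s) p.2 := by
  by_cases h : p.1 ≠ 0 ∧ p.2 ≠ 0 ∧ k - p.1 - p.2 ≠ 0
  · obtain ⟨h1, h2, h3⟩ := h
    have h2s : (0:ℝ) ≤ 2*s := by linarith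
    have hVadd : V (2*s+2) p.1 = V (2*s) p.1 * V 2 p.1 := V_add h2s (by norm_num) p.1
    rw [Gq, if_pos ⟨h1, h2, h3⟩]
    simp only [zf, if_neg h1, if_neg h2, if_neg h3]
    calc (V (2*s) p.1 + V (2*s) p.2 + V (2*s) (k - p.1 - p.2)) /
        (V (2*s) p.1 * V 2 p.1 * V (2*s) p.2 * V (2*s) (k - p.1 - p.2))
        ≤ (V 2 p.1 * V (2*s) p.2)⁻¹ + (V (2*s) p.1 * V 2 p.1 * V (2*s) (k - p.1 - p.2))⁻¹
          + (V (2*s) p.1 * V 2 p.1 * V (2*s) p.2)⁻¹ :=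
        abstract_ineq _ _ _ _ (V_ne_zero h2s h1) (V_ne_top h2s _) (one_le_V h2s h2)
          (V_ne_top h2s _) (one_le_V h2s h3) (V_ne_top h2s _)
          (V_ne_zero (by norm_num) h1) (V_ne_top (by norm_num) _)
      _ = _ := by
        rw [← hVadd, V_neg, V_neg, V_neg, V_neg,
          ENNReal.mul_inv (Or.inl (V_ne_zero (by norm_num : (0:ℝ) ≤ 2) h1)) (Or.inr (V_ne_zero h2s h2)),
          ENNReal.mul_inv (Or.inl (V_ne_zero (by linarith : (0:ℝ) ≤ 2*s+2) h1))
            (Or.inr (V_ne_zero h2s h3)),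
          ENNReal.mul_inv (Or.inl (V_ne_zero (by linarith : (0:ℝ) ≤ 2*s+2) h1))
            (Or.inr (V_ne_zero h2s h2))]
  · rw [Gq, if_neg h]
    exact zero_le

lemma nn_add_le (a b : ℤ) : nn (a + b) ≤ nn a + nn b := by
  rw [nn, nn, nn, ← Nat.cast_add]
  exact_mod_cast Int.natAbs_add_le a b

lemma nn_triangle (k : ℤ) (p : ℤ × ℤ) : nn k ≤ nn p.1 + nn p.2 + nn (k - p.1 - p.2) := by
  have hk : k = p.1 + p.2 + (k - p.1 - p.2) := by ring
  calc nn k = nn (p.1 + p.2 + (k - p.1 - p.2)) := by rw [← hk]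
    _ ≤ nn (p.1 + p.2) + nn (k - p.1 - p.2) := nn_add_le _ _
    _ ≤ nn p.1 + nn p.2 + nn (k - p.1 - p.2) := add_le_add_left (nn_add_le _ _) _

lemma V_k_le {s : ℝ} (hs : 0 < s) (k : ℤ) (p : ℤ × ℤ) :
    V (2*s) k ≤ (3:ℝ≥0∞) ^ (2*s) *
      (V (2*s) p.1 + V (2*s) p.2 + V (2*s) (k - p.1 - p.2)) := by
  have h2s : (0:ℝ) ≤ 2*s := by linarith
  set m := max (nn p.1) (max (nn p.2) (nn (k - p.1 - p.2))) with hm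
  have h3m : nn k ≤ 3 * m := by
    calc nn k ≤ nn p.1 + nn p.2 + nn (k - p.1 - p.2) := nn_triangle k p
      _ ≤ m + m + m := by
        gcongr
        · exact le_max_left _ _
        · exact le_max_of_le_right (le_max_left _ _)
        · exact le_max_of_le_right (le_max_right _ _)
      _ = 3 * m := by ring
  have hmle : m ^ (2*s) ≤ V (2*s) p.1 + V (2*s) p.2 + V (2*s) (k - p.1 - p.2) := by
    rcases max_choice (nn p.1) (max (nn p.2) (nn (k - p.1 - p.2))) with h' | h'
    · rw [hm, h']
      exact le_add_right (le_add_right le_rfl)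
    · rw [hm, h']
      rcases max_choice (nn p.2) (nn (k - p.1 - p.2)) with h'' | h''
      · rw [h'']
        exact le_add_right (le_add_left le_rfl)
      · rw [h'']
        exact le_add_left le_rfl
  calc V (2*s) k = nn k ^ (2*s) := rfl
    _ ≤ (3 * m) ^ (2*s) := ENNReal.rpow_le_rpow h3m h2s
    _ = 3 ^ (2*s) * m ^ (2*s) := ENNReal.mul_rpow_of_nonneg _ _ h2s
    _ ≤ _ := mul_le_mul_right hmle _

lemma WH_le {s : ℝ} (hs : 0 < s) (a b c : ℤ → ℝ≥0∞) (k : ℤ) (p : ℤ × ℤ) :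
    V (2*s) k * Hq s a b c k p ≤ (3:ℝ≥0∞) ^ (2*s) *
      ((V (2*s) p.1 * a p.1 ^ 2) * ((V (2*s) p.2 * b p.2 ^ 2) *
        (V (2*s) (k - p.1 - p.2) * c (k - p.1 - p.2) ^ 2))) := by
  by_cases h : p.1 ≠ 0 ∧ p.2 ≠ 0 ∧ k - p.1 - p.2 ≠ 0
  · rw [Hq, if_pos h]
    calc V (2*s) k * (V (2*s) p.1 * V (2*s) p.2 * V (2*s) (k - p.1 - p.2) /
          (V (2*s) p.1 + V (2*s) p.2 + V (2*s) (k - p.1 - p.2)) *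
          (a p.1 ^ 2 * b p.2 ^ 2 * c (k - p.1 - p.2) ^ 2))
        ≤ ((3:ℝ≥0∞) ^ (2*s) * (V (2*s) p.1 + V (2*s) p.2 + V (2*s) (k - p.1 - p.2))) *
          (V (2*s) p.1 * V (2*s) p.2 * V (2*s) (k - p.1 - p.2) /
          (V (2*s) p.1 + V (2*s) p.2 + V (2*s) (k - p.1 - p.2)) *
          (a p.1 ^ 2 * b p.2 ^ 2 * c (k - p.1 - p.2) ^ 2)) :=
        mul_le_mul_left (V_k_le hs k p) _
      _ = (3:ℝ≥0∞) ^ (2*s) * (((V (2*s) p.1 + V (2*s) p.2 + V (2*s) (k - p.1 - p.2)) *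
          (V (2*s) p.1 + V (2*s) p.2 + V (2*s) (k - p.1 - p.2))⁻¹) *
          ((V (2*s) p.1 * a p.1 ^ 2) * ((V (2*s) p.2 * b p.2 ^ 2) *
          (V (2*s) (k - p.1 - p.2) * c (k - p.1 - p.2) ^ 2)))) := by
        rw [div_eq_mul_inv]; ring
      _ ≤ (3:ℝ≥0∞) ^ (2*s) * (1 *
          ((V (2*s) p.1 * a p.1 ^ 2) * ((V (2*s) p.2 * b p.2 ^ 2) *
          (V (2*s) (k - p.1 - p.2) * c (k - p.1 - p.2) ^ 2)))) := by
        gcongr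
        exact ENNReal.mul_inv_le_one _
      _ = _ := by rw [one_mul]
  · rw [Hq, if_neg h, mul_zero]
    exact zero_le

def ZZ (s : ℝ) : ℝ≥0∞ := Z 2 * Z (2*s) + Z (2*s+2) * Z (2*s) + Z (2*s+2) * Z (2*s)
def C0 (s : ℝ) : ℝ≥0∞ := ZZ s * (3:ℝ≥0∞) ^ (2*s)

lemma ZZ_ne_top {s : ℝ} (hs : 1/2 < s) : ZZ s ≠ ⊤ := by
  have z1 := Z_ne_top (q := 2) (by norm_num)
  have z2 := Z_ne_top (q := 2*s) (by linarith)
  have z3 := Z_ne_top (q := 2*s+2) (by linarith)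
  rw [ZZ]
  exact ENNReal.add_ne_top.mpr ⟨ENNReal.add_ne_top.mpr
    ⟨ENNReal.mul_ne_top z1 z2, ENNReal.mul_ne_top z3 z2⟩, ENNReal.mul_ne_top z3 z2⟩

lemma C0_ne_top {s : ℝ} (hs : 1/2 < s) : C0 s ≠ ⊤ :=
  ENNReal.mul_ne_top (ZZ_ne_top hs)
    (ENNReal.rpow_ne_top_of_nonneg (by linarith) (by norm_num))

lemma sumG_le {s : ℝ} (hs : 0 < s) (k : ℤ) : ∑' p : ℤ × ℤ, Gq s k p ≤ ZZ s := by
  calc ∑' p : ℤ × ℤ, Gq s k p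
      ≤ ∑' p : ℤ × ℤ, (zf 2 p.1 * zf (2*s) p.2 + zf (2*s+2) p.1 * zf (2*s) (k - p.1 - p.2)
        + zf (2*s+2) p.1 * zf (2*s) p.2) := ENNReal.tsum_le_tsum (G_le hs k)
    _ = (∑' p : ℤ × ℤ, (zf 2 p.1 * zf (2*s) p.2 + zf (2*s+2) p.1 * zf (2*s) (k - p.1 - p.2)))
        + ∑' p : ℤ × ℤ, zf (2*s+2) p.1 * zf (2*s) p.2 := ENNReal.tsum_add
    _ = (∑' p : ℤ × ℤ, zf 2 p.1 * zf (2*s) p.2)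
        + (∑' p : ℤ × ℤ, zf (2*s+2) p.1 * zf (2*s) (k - p.1 - p.2))
        + ∑' p : ℤ × ℤ, zf (2*s+2) p.1 * zf (2*s) p.2 := by rw [ENNReal.tsum_add]
    _ = ZZ s := by rw [sum_prod, sum_prod_shift, sum_prod, ZZ, Z, Z, Z]

lemma sumWH_le {s : ℝ} (hs : 0 < s) (a b c : ℤ → ℝ≥0∞) :
    ∑' k : ℤ, V (2*s) k * ∑' p : ℤ × ℤ, Hq s a b c k p ≤ (3:ℝ≥0∞) ^ (2*s) *
      ((∑' j : ℤ, V (2*s) j * a j ^ 2) * ((∑' j : ℤ, V (2*s) j * b j ^ 2) *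
        (∑' j : ℤ, V (2*s) j * c j ^ 2))) := by
  have hshift : ∀ p : ℤ × ℤ, ∑' k : ℤ, V (2*s) (k - p.1 - p.2) * c (k - p.1 - p.2) ^ 2
      = ∑' j : ℤ, V (2*s) j * c j ^ 2 := by
    intro p
    have he := (Equiv.subRight (p.1 + p.2)).tsum_eq (fun j => V (2*s) j * c j ^ 2)
    rw [← he]
    refine tsum_congr fun k => ?_
    have h2 : (Equiv.subRight (p.1 + p.2)) k = k - p.1 - p.2 := by
      simp [Equiv.subRight, sub_sub]
    rw [h2]
  calc ∑' k : ℤ, V (2*s) k * ∑' p : ℤ × ℤ, Hq s a b c k p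
      = ∑' k : ℤ, ∑' p : ℤ × ℤ, V (2*s) k * Hq s a b c k p := by
        refine tsum_congr fun k => ?_
        rw [ENNReal.tsum_mul_left]
    _ ≤ ∑' k : ℤ, ∑' p : ℤ × ℤ, (3:ℝ≥0∞) ^ (2*s) *
        ((V (2*s) p.1 * a p.1 ^ 2) * ((V (2*s) p.2 * b p.2 ^ 2) *
          (V (2*s) (k - p.1 - p.2) * c (k - p.1 - p.2) ^ 2))) :=
        ENNReal.tsum_le_tsum fun k => ENNReal.tsum_le_tsum fun p => WH_le hs a b c k p
    _ = (3:ℝ≥0∞) ^ (2*s) * ∑' k : ℤ, ∑' p : ℤ × ℤ,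
        ((V (2*s) p.1 * a p.1 ^ 2) * ((V (2*s) p.2 * b p.2 ^ 2) *
          (V (2*s) (k - p.1 - p.2) * c (k - p.1 - p.2) ^ 2))) := by
        simp_rw [ENNReal.tsum_mul_left]
    _ = (3:ℝ≥0∞) ^ (2*s) * ∑' p : ℤ × ℤ, ∑' k : ℤ,
        ((V (2*s) p.1 * a p.1 ^ 2) * ((V (2*s) p.2 * b p.2 ^ 2) *
          (V (2*s) (k - p.1 - p.2) * c (k - p.1 - p.2) ^ 2))) := by
        congr 1
        exact ENNReal.tsum_comm (f := fun (k : ℤ) (p : ℤ × ℤ) =>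
          (V (2*s) p.1 * a p.1 ^ 2) * ((V (2*s) p.2 * b p.2 ^ 2) *
          (V (2*s) (k - p.1 - p.2) * c (k - p.1 - p.2) ^ 2)))
    _ = (3:ℝ≥0∞) ^ (2*s) * ∑' p : ℤ × ℤ,
        ((V (2*s) p.1 * a p.1 ^ 2) * (V (2*s) p.2 * b p.2 ^ 2)) *
          (∑' j : ℤ, V (2*s) j * c j ^ 2) := by
        congr 1
        refine tsum_congr fun p => ?_
        rw [ENNReal.tsum_mul_left, ENNReal.tsum_mul_left, hshift p, ← mul_assoc]
    _ = _ := by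
        congr 1
        rw [ENNReal.tsum_mul_right,
          sum_prod (fun j => V (2*s) j * a j ^ 2) (fun j => V (2*s) j * b j ^ 2), mul_assoc]

lemma rpow_half_sq {x : ℝ≥0∞} : (x ^ ((1:ℝ)/2)) ^ 2 = x := by
  rw [← ENNReal.rpow_natCast (x ^ ((1:ℝ)/2)) 2, ← ENNReal.rpow_mul]
  norm_num

lemma sq_rpow_half {x : ℝ≥0∞} : (x ^ 2) ^ ((1:ℝ)/2) = x := by
  rw [← ENNReal.rpow_natCast x 2, ← ENNReal.rpow_mul]
  norm_num

lemma main {s : ℝ} (hs : 0 < s) (a b c : ℤ → ℝ≥0∞) (ha : ∀ j, a j ≠ ⊤)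
    (hb : ∀ j, b j ≠ ⊤) (hc : ∀ j, c j ≠ ⊤) :
    ∑' k : ℤ, V (2*s) k * (∑' p : ℤ × ℤ, Fq a b c k p) ^ 2 ≤
      C0 s * ((∑' j : ℤ, V (2*s) j * a j ^ 2) * ((∑' j : ℤ, V (2*s) j * b j ^ 2) *
        (∑' j : ℤ, V (2*s) j * c j ^ 2))) := by
  have hcs : ∀ k : ℤ, (∑' p : ℤ × ℤ, Fq a b c k p) ^ 2 ≤
      ZZ s * ∑' p : ℤ × ℤ, Hq s a b c k p := by
    intro k
    set f := fun p : ℤ × ℤ => (Gq s k p) ^ ((1:ℝ)/2) with hf_def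
    set g := fun p : ℤ × ℤ => (Hq s a b c k p) ^ ((1:ℝ)/2) with hg_def
    have hf : ∀ p, f p ≠ ⊤ := fun p =>
      ENNReal.rpow_ne_top_of_nonneg (by norm_num) (Gq_ne_top hs k p)
    have hg : ∀ p, g p ≠ ⊤ := fun p =>
      ENNReal.rpow_ne_top_of_nonneg (by norm_num) (Hq_ne_top hs a b c ha hb hc k p)
    have hfg : ∀ p, f p * g p = Fq a b c k p := by
      intro p
      rw [hf_def, hg_def]
      beta_reduce
      rw [← ENNReal.mul_rpow_of_nonneg _ _ (by norm_num : (0:ℝ) ≤ 1/2),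
        ← FGH hs a b c k p, sq_rpow_half]
    have hf2 : ∀ p, f p ^ 2 = Gq s k p := fun p => rpow_half_sq
    have hg2 : ∀ p, g p ^ 2 = Hq s a b c k p := fun p => rpow_half_sq
    calc (∑' p : ℤ × ℤ, Fq a b c k p) ^ 2
        = (∑' p : ℤ × ℤ, f p * g p) ^ 2 := by
          congr 1
          exact (tsum_congr hfg).symm
      _ ≤ (∑' p : ℤ × ℤ, f p ^ 2) * ∑' p : ℤ × ℤ, g p ^ 2 := ennreal_tsum_cs f g hf hg
      _ = (∑' p : ℤ × ℤ, Gq s k p) * ∑' p : ℤ × ℤ, Hq s a b c k p := by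
          rw [tsum_congr hf2, tsum_congr hg2]
      _ ≤ ZZ s * ∑' p : ℤ × ℤ, Hq s a b c k p := mul_le_mul_left (sumG_le hs k) _
  calc ∑' k : ℤ, V (2*s) k * (∑' p : ℤ × ℤ, Fq a b c k p) ^ 2
      ≤ ∑' k : ℤ, V (2*s) k * (ZZ s * ∑' p : ℤ × ℤ, Hq s a b c k p) :=
        ENNReal.tsum_le_tsum fun k => mul_le_mul_right (hcs k) _
    _ = ZZ s * ∑' k : ℤ, V (2*s) k * ∑' p : ℤ × ℤ, Hq s a b c k p := by
        rw [← ENNReal.tsum_mul_left]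
        refine tsum_congr fun k => ?_
        ring
    _ ≤ ZZ s * ((3:ℝ≥0∞) ^ (2*s) * ((∑' j : ℤ, V (2*s) j * a j ^ 2) *
        ((∑' j : ℤ, V (2*s) j * b j ^ 2) * (∑' j : ℤ, V (2*s) j * c j ^ 2)))) :=
        mul_le_mul_right (sumWH_le hs a b c) _
    _ = _ := by rw [C0, mul_assoc]

lemma norm_osc3 (t : ℝ) (k1 k2 k3 : ℤ) : ‖osc3 t k1 k2 k3‖ = 1 := by
  rw [osc3, show 3 * Complex.I * ((k1 + k2 : ℤ) : ℂ) * ((k2 + k3 : ℤ) : ℂ) *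
      ((k1 + k3 : ℤ) : ℂ) * (t : ℂ) =
      ((3 * ((k1:ℝ) + k2) * ((k2:ℝ) + k3) * ((k1:ℝ) + k3) * t : ℝ) : ℂ) * Complex.I by
    push_cast; ring]
  rw [Complex.norm_exp_ofReal_mul_I]

def Dr (φ ψ ξ : ℤ → ℂ) (k : ℤ) (p : ℤ × ℤ) : ℝ :=
  if p.1 ≠ 0 ∧ p.2 ≠ 0 ∧ k - p.1 - p.2 ≠ 0 then
    ‖φ p.1‖ * ‖ψ p.2‖ * ‖ξ (k - p.1 - p.2)‖ / |(p.1:ℝ)| else 0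

lemma Dr_nonneg (φ ψ ξ : ℤ → ℂ) (k : ℤ) (p : ℤ × ℤ) : 0 ≤ Dr φ ψ ξ k p := by
  rw [Dr]
  split
  · positivity
  · exact le_refl 0

lemma norm_term (t : ℝ) (φ ψ ξ : ℤ → ℂ) (k : ℤ) (p : ℤ × ℤ) :
    ‖if p.1 ≠ 0 ∧ p.2 ≠ 0 ∧ k - p.1 - p.2 ≠ 0 then
      osc3 t p.1 p.2 (k - p.1 - p.2) * φ p.1 * ψ p.2 * ξ (k - p.1 - p.2) / (p.1 : ℂ)
    else 0‖ = Dr φ ψ ξ k p := by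
  rw [Dr]
  split
  · rw [norm_div, norm_mul, norm_mul, norm_mul, norm_osc3, one_mul]
    congr 1
    rw [show ((p.1 : ℤ) : ℂ) = ((p.1 : ℝ) : ℂ) by push_cast; rfl, Complex.norm_real,
      Real.norm_eq_abs]
  · exact norm_zero

lemma summable_weighted {s r : ℝ} (hs : 0 < s) (h2 : 1 < 2*s + 2*r) {u : ℤ → ℂ}
    (hu : memH s u) :
    Summable (fun j : ℤ => if j = 0 then 0 else ‖u j‖ / |(j:ℝ)| ^ r) := by
  have h1 : Summable (fun j : ℤ => wt s j * ‖u j‖^2) := (memH_iff_summable hs u).1 hu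
  have h2' : Summable (fun j : ℤ => |(j:ℝ)| ^ (-(2*s+2*r))) := Real.summable_abs_int_rpow h2
  refine Summable.of_nonneg_of_le (fun j => ?_) (fun j => ?_) (((h1.add h2').mul_left (1/2)))
  · split
    · exact le_refl 0
    · positivity
  · rcases eq_or_ne j 0 with rfl | hj
    · rw [if_pos rfl]
      have hw : wt s (0:ℤ) * ‖u 0‖^2 = 0 := term_zero hs u
      rw [hw]
      positivity
    · rw [if_neg hj]
      have hpos : (0:ℝ) < |(j:ℝ)| := by simp only [abs_pos]; exact_mod_cast hj
      have h1j : (1:ℝ) ≤ |(j:ℝ)| := by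
        rcases Int.one_le_abs (by exact_mod_cast hj : j ≠ 0) with h
        calc (1:ℝ) = ((1:ℤ):ℝ) := by norm_num
          _ ≤ ((|j|:ℤ):ℝ) := by exact_mod_cast h
          _ = |(j:ℝ)| := by push_cast; ring
      set x := |(j:ℝ)| ^ s * ‖u j‖ with hx
      set y := |(j:ℝ)| ^ (-(s+r)) with hy
      have hxy : ‖u j‖ / |(j:ℝ)| ^ r = x * y := by
        rw [hx, hy, div_eq_mul_inv, ← Real.rpow_neg (abs_nonneg _)]
        rw [show x * y = ‖u j‖ * (|(j:ℝ)| ^ s * |(j:ℝ)| ^ (-(s+r))) from by ring,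
          ← Real.rpow_add hpos]
        ring_nf
      have hsq : ∀ e : ℝ, (|(j:ℝ)| ^ e)^2 = |(j:ℝ)| ^ (2*e) := by
        intro e
        rw [← Real.rpow_natCast (|(j:ℝ)| ^ e) 2, ← Real.rpow_mul (abs_nonneg _)]
        congr 1
        ring
      have hx2 : x^2 = wt s j * ‖u j‖^2 := by
        rw [hx, mul_pow, hsq s, wt_eq]
      have hy2 : y^2 = |(j:ℝ)| ^ (-(2*s+2*r)) := by
        rw [hy, hsq (-(s+r))]
        congr 1
        ring
      rw [hxy]
      calc x * y ≤ (x^2 + y^2)/2 := by nlinarith [two_mul_le_add_sq x y]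
        _ = 1/2 * (wt s j * ‖u j‖^2 + |(j:ℝ)| ^ (-(2*s+2*r))) := by rw [hx2, hy2]; ring

lemma one_le_abs_cast {j : ℤ} (hj : j ≠ 0) : (1:ℝ) ≤ |(j:ℝ)| := by
  have h := Int.one_le_abs (by exact_mod_cast hj : j ≠ 0)
  calc (1:ℝ) = ((1:ℤ):ℝ) := by norm_num
    _ ≤ ((|j|:ℤ):ℝ) := by exact_mod_cast h
    _ = |(j:ℝ)| := by push_cast; ring

lemma one_le_wt {s : ℝ} (hs : 0 < s) {j : ℤ} (hj : j ≠ 0) : (1:ℝ) ≤ wt s j := by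
  rw [wt_eq]
  calc (1:ℝ) = |(j:ℝ)| ^ (0:ℝ) := (Real.rpow_zero _).symm
    _ ≤ |(j:ℝ)| ^ (2*s) := Real.rpow_le_rpow_of_exponent_le (one_le_abs_cast hj) (by linarith)

lemma norm_le_of_memH {s : ℝ} (hs : 0 < s) {u : ℤ → ℂ} (hu : memH s u) {j : ℤ} (hj : j ≠ 0) :
    ‖u j‖ ≤ Real.sqrt (∑' k : ℤ, wt s k * ‖u k‖^2) := by
  have h1 : Summable (fun k : ℤ => wt s k * ‖u k‖^2) := (memH_iff_summable hs u).1 hu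
  have hnn : ∀ k, 0 ≤ wt s k * ‖u k‖^2 := fun k => mul_nonneg (wt_nonneg s k) (by positivity)
  have hle : ‖u j‖^2 ≤ ∑' k : ℤ, wt s k * ‖u k‖^2 :=
    le_trans (le_mul_of_one_le_left (by positivity) (one_le_wt hs hj))
      (Summable.le_tsum h1 j (fun k _ => hnn k))
  calc ‖u j‖ = Real.sqrt (‖u j‖^2) := (Real.sqrt_sq (norm_nonneg _)).symm
    _ ≤ _ := Real.sqrt_le_sqrt hle

lemma summable_D {s : ℝ} (hs : 1/2 < s) {φ ψ ξ : ℤ → ℂ}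
    (hφ : memH s φ) (hψ : memH s ψ) (hξ : memH s ξ) (k : ℤ) :
    Summable (Dr φ ψ ξ k) := by
  have hs0 : 0 < s := by linarith
  set M := Real.sqrt (∑' j : ℤ, wt s j * ‖ξ j‖^2) with hM
  have hM0 : (0:ℝ) ≤ M := Real.sqrt_nonneg _
  have hSa : Summable (fun j : ℤ => if j = 0 then 0 else ‖φ j‖ / |(j:ℝ)| ^ (1:ℝ)) :=
    summable_weighted hs0 (by linarith) hφ
  have hSb : Summable (fun j : ℤ => if j = 0 then 0 else ‖ψ j‖ / |(j:ℝ)| ^ (0:ℝ)) :=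
    summable_weighted hs0 (by linarith) hψ
  have hnna : ∀ j : ℤ, 0 ≤ (if j = 0 then 0 else ‖φ j‖ / |(j:ℝ)| ^ (1:ℝ)) := by
    intro j; split
    · exact le_refl 0
    · positivity
  have hnnb : ∀ j : ℤ, 0 ≤ (if j = 0 then 0 else ‖ψ j‖ / |(j:ℝ)| ^ (0:ℝ)) := by
    intro j; split
    · exact le_refl 0
    · positivity
  refine Summable.of_nonneg_of_le (Dr_nonneg φ ψ ξ k) (fun p => ?_)
    ((hSa.mul_of_nonneg hSb hnna hnnb).mul_right M)
  rw [Dr]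
  split
  · rename_i h
    obtain ⟨h1, h2, h3⟩ := h
    rw [if_neg h1, if_neg h2, Real.rpow_one, Real.rpow_zero, div_one]
    have hξ3 : ‖ξ (k - p.1 - p.2)‖ ≤ M := norm_le_of_memH hs0 hξ h3
    have hpos : (0:ℝ) < |(p.1:ℝ)| := by simp only [abs_pos]; exact_mod_cast h1
    calc ‖φ p.1‖ * ‖ψ p.2‖ * ‖ξ (k - p.1 - p.2)‖ / |(p.1:ℝ)|
        = (‖φ p.1‖ / |(p.1:ℝ)|) * ‖ψ p.2‖ * ‖ξ (k - p.1 - p.2)‖ := by ring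
      _ ≤ (‖φ p.1‖ / |(p.1:ℝ)|) * ‖ψ p.2‖ * M := by
          have hnn : (0:ℝ) ≤ (‖φ p.1‖ / |(p.1:ℝ)|) * ‖ψ p.2‖ := by positivity
          exact mul_le_mul_of_nonneg_left hξ3 hnn
      _ = ‖φ p.1‖ / |(p.1:ℝ)| * ‖ψ p.2‖ * M := rfl
  · positivity

lemma norm_R3_le {s : ℝ} (hs : 1/2 < s) (t : ℝ) {φ ψ ξ : ℤ → ℂ}
    (hφ : memH s φ) (hψ : memH s ψ) (hξ : memH s ξ) (k : ℤ) :
    ‖R3 t φ ψ ξ k‖ ≤ ∑' p : ℤ × ℤ, Dr φ ψ ξ k p := by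
  have heq : (fun p : ℤ × ℤ => ‖if p.1 ≠ 0 ∧ p.2 ≠ 0 ∧ k - p.1 - p.2 ≠ 0 then
      osc3 t p.1 p.2 (k - p.1 - p.2) * φ p.1 * ψ p.2 * ξ (k - p.1 - p.2) / (p.1 : ℂ)
    else 0‖) = Dr φ ψ ξ k := funext (norm_term t φ ψ ξ k)
  have hsum : Summable fun p : ℤ × ℤ => ‖if p.1 ≠ 0 ∧ p.2 ≠ 0 ∧ k - p.1 - p.2 ≠ 0 then
      osc3 t p.1 p.2 (k - p.1 - p.2) * φ p.1 * ψ p.2 * ξ (k - p.1 - p.2) / (p.1 : ℂ)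
    else 0‖ := by
    rw [heq]
    exact summable_D hs hφ hψ hξ k
  calc ‖R3 t φ ψ ξ k‖ ≤ ∑' p : ℤ × ℤ, ‖if p.1 ≠ 0 ∧ p.2 ≠ 0 ∧ k - p.1 - p.2 ≠ 0 then
      osc3 t p.1 p.2 (k - p.1 - p.2) * φ p.1 * ψ p.2 * ξ (k - p.1 - p.2) / (p.1 : ℂ)
    else 0‖ := norm_tsum_le_tsum_norm hsum
    _ = _ := by rw [heq]

lemma ofReal_sumDr {s : ℝ} (hs : 1/2 < s) {φ ψ ξ : ℤ → ℂ}
    (hφ : memH s φ) (hψ : memH s ψ) (hξ : memH s ξ) (k : ℤ) :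
    ENNReal.ofReal (∑' p : ℤ × ℤ, Dr φ ψ ξ k p)
      = ∑' p : ℤ × ℤ, Fq (en φ) (en ψ) (en ξ) k p := by
  rw [ENNReal.ofReal_tsum_of_nonneg (Dr_nonneg φ ψ ξ k) (summable_D hs hφ hψ hξ k)]
  refine tsum_congr fun p => ?_
  rw [Dr, Fq]
  split
  · rename_i h
    obtain ⟨h1, h2, h3⟩ := h
    have hpos : (0:ℝ) < |(p.1:ℝ)| := by simp only [abs_pos]; exact_mod_cast h1
    rw [ENNReal.ofReal_div_of_pos hpos, ENNReal.ofReal_mul (by positivity),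
      ENNReal.ofReal_mul (norm_nonneg _), nn_eq]
    rfl
  · exact ENNReal.ofReal_zero

end R3E

open R3E

/-- Trilinear estimate for `R₃`. -/
theorem r3_trilinear_estimate (s : ℝ) (hs : 1 / 2 < s) :
    ∃ C : ℝ, ∀ t : ℝ, ∀ φ ψ ξ : ℤ → ℂ, memH s φ → memH s ψ → memH s ξ →
      memH s (R3 t φ ψ ξ) ∧
      hnorm s (R3 t φ ψ ξ) ≤ C * hnorm s φ * hnorm s ψ * hnorm s ξ := by
  refine ⟨Real.sqrt (C0 s).toReal, fun t φ ψ ξ hφ hψ hξ => ?_⟩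
  have hs0 : 0 < s := by linarith
  have hmain := main hs0 (en φ) (en ψ) (en ξ) (en_ne_top φ) (en_ne_top ψ) (en_ne_top ξ)
  have hPa : Phi s φ ≠ ⊤ := Phi_ne_top hs0 hφ
  have hPb : Phi s ψ ≠ ⊤ := Phi_ne_top hs0 hψ
  have hPc : Phi s ξ ≠ ⊤ := Phi_ne_top hs0 hξ
  have hmain' : ∑' k : ℤ, V (2*s) k * (∑' p : ℤ × ℤ, Fq (en φ) (en ψ) (en ξ) k p) ^ 2 ≤
      C0 s * (Phi s φ * (Phi s ψ * Phi s ξ)) := hmain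
  have hRHS : C0 s * (Phi s φ * (Phi s ψ * Phi s ξ)) ≠ ⊤ :=
    ENNReal.mul_ne_top (C0_ne_top hs)
      (ENNReal.mul_ne_top hPa (ENNReal.mul_ne_top hPb hPc))
  set g : ℤ → ℝ≥0∞ := fun k => V (2*s) k * (∑' p : ℤ × ℤ, Fq (en φ) (en ψ) (en ξ) k p) ^ 2
    with hg_def
  have hg_ne_top : ∑' k : ℤ, g k ≠ ⊤ := ne_top_of_le_ne_top hRHS hmain'
  have hgk_ne_top : ∀ k : ℤ, g k ≠ ⊤ := fun k => ne_top_of_le_ne_top hg_ne_top (ENNReal.le_tsum k)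
  have hpt : ∀ k : ℤ, ENNReal.ofReal (wt s k * ‖R3 t φ ψ ξ k‖^2) ≤ g k := by
    intro k
    rw [ENNReal.ofReal_mul (wt_nonneg s k), ofReal_wt hs0, hg_def]
    refine mul_le_mul_right ?_ _
    rw [ENNReal.ofReal_pow (norm_nonneg _)]
    refine pow_le_pow_left' ?_ 2
    calc ENNReal.ofReal ‖R3 t φ ψ ξ k‖
        ≤ ENNReal.ofReal (∑' p : ℤ × ℤ, Dr φ ψ ξ k p) :=
          ENNReal.ofReal_le_ofReal (norm_R3_le hs t hφ hψ hξ k)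
      _ = ∑' p : ℤ × ℤ, Fq (en φ) (en ψ) (en ξ) k p := ofReal_sumDr hs hφ hψ hξ k
  have hreal : ∀ k : ℤ, wt s k * ‖R3 t φ ψ ξ k‖^2 ≤ (g k).toReal := by
    intro k
    have h0 : (0:ℝ) ≤ wt s k * ‖R3 t φ ψ ξ k‖^2 :=
      mul_nonneg (wt_nonneg s k) (by positivity)
    rw [show wt s k * ‖R3 t φ ψ ξ k‖^2
        = (ENNReal.ofReal (wt s k * ‖R3 t φ ψ ξ k‖^2)).toReal from
      (ENNReal.toReal_ofReal h0).symm]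
    exact ENNReal.toReal_mono (hgk_ne_top k) (hpt k)
  have hsummable_g : Summable (fun k : ℤ => (g k).toReal) := ENNReal.summable_toReal hg_ne_top
  have hmem : memH s (R3 t φ ψ ξ) := by
    rw [memH_iff_summable hs0]
    refine Summable.of_nonneg_of_le (fun k => mul_nonneg (wt_nonneg s k) (by positivity))
      hreal hsummable_g
  refine ⟨hmem, ?_⟩
  have hsum_le : (∑' k : {k : ℤ // k ≠ 0}, wt s k.1 * ‖R3 t φ ψ ξ k.1‖^2) ≤
      (C0 s).toReal * ((Phi s φ).toReal * ((Phi s ψ).toReal * (Phi s ξ).toReal)) := by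
    rw [tsum_sub_eq hs0]
    calc ∑' k : ℤ, wt s k * ‖R3 t φ ψ ξ k‖^2
        ≤ ∑' k : ℤ, (g k).toReal :=
          Summable.tsum_le_tsum hreal ((memH_iff_summable hs0 _).1 hmem) hsummable_g
      _ = (∑' k : ℤ, g k).toReal := (ENNReal.tsum_toReal_eq hgk_ne_top).symm
      _ ≤ (C0 s * (Phi s φ * (Phi s ψ * Phi s ξ))).toReal := ENNReal.toReal_mono hRHS hmain'
      _ = _ := by rw [ENNReal.toReal_mul, ENNReal.toReal_mul, ENNReal.toReal_mul]
  calc hnorm s (R3 t φ ψ ξ)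
      = Real.sqrt (∑' k : {k : ℤ // k ≠ 0}, wt s k.1 * ‖R3 t φ ψ ξ k.1‖^2) := rfl
    _ ≤ Real.sqrt ((C0 s).toReal * ((Phi s φ).toReal * ((Phi s ψ).toReal * (Phi s ξ).toReal))) :=
        Real.sqrt_le_sqrt hsum_le
    _ = Real.sqrt (C0 s).toReal * (Real.sqrt (Phi s φ).toReal *
        (Real.sqrt (Phi s ψ).toReal * Real.sqrt (Phi s ξ).toReal)) := by
        rw [Real.sqrt_mul ENNReal.toReal_nonneg, Real.sqrt_mul ENNReal.toReal_nonneg,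
          Real.sqrt_mul ENNReal.toReal_nonneg]
    _ = Real.sqrt (C0 s).toReal * hnorm s φ * hnorm s ψ * hnorm s ξ := by
        rw [← hnorm_eq_sqrt hs0 hφ, ← hnorm_eq_sqrt hs0 hψ, ← hnorm_eq_sqrt hs0 hξ]
        ring
end
end
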